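/- arXiv:1503.06715 — 5 statements merged into one kernel-verified Lean document; each statement's English description precedes it below -/
import Mathlib

section
/- Let g, h : (0,1) → ℝ be bounded functions with g ≥ 0, such that (1/(1-t)) ∫_t^1 g(s) ds → 0 and (1/(1-t)) ∫_t^1 h(s) ds → 0 as t → 1⁻. Then there exists a positive monotone function λ : (0,1) → ℝ with λ(t) → ∞ as t → 1⁻, and a sequence of times t̃_k → 1⁻, such that limsup_{k→∞} sup_{τ ∈ (0, 1-t̃_k)} (1/τ) ∫_{t̃_k}^{t̃_k+τ} (λ(s) g(s) + h(s)) ds ≤ 0. -/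
open MeasureTheory Set Filter Topology

lemma avg_extract (F : ℝ → ℝ)
    (hF : Tendsto (fun t => (1 / (1 - t)) * F t) (nhdsWithin 1 (Set.Iio 1)) (nhds 0)) :
    ∀ ε > (0:ℝ), ∃ c : ℝ, 0 < c ∧ c < 1 ∧ ∀ t, c ≤ t → t < 1 → |F t| ≤ ε * (1 - t) := by
  intro ε hε
  have h1 : ∀ᶠ t in nhdsWithin 1 (Set.Iio 1), |(1 / (1 - t)) * F t| < ε := by
    have := Metric.tendsto_nhds.mp hF ε hε
    simp only [Real.dist_eq, sub_zero] at this
    filter_upwards [this] with t ht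
    simpa using ht
  rw [eventually_nhdsWithin_iff, Metric.eventually_nhds_iff] at h1
  obtain ⟨δ, hδ, hδ'⟩ := h1
  refine ⟨max (1 - δ/2) (1/2), by positivity, by
    apply max_lt (by linarith) (by norm_num), ?_⟩
  intro t hct ht1
  have ht2 : 1 - δ/2 ≤ t := le_trans (le_max_left _ _) hct
  have hd : dist t 1 < δ := by rw [Real.dist_eq]; rw [abs_sub_lt_iff]; constructor <;> linarith
  have := hδ' hd ht1
  have h1t : 0 < 1 - t := by linarith
  rw [abs_mul, abs_of_pos (by positivity : 0 < 1/(1-t))] at this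
  calc |F t| = (1-t) * ((1/(1-t)) * |F t|) := by field_simp
    _ ≤ (1-t) * ε := by
        apply mul_le_mul_of_nonneg_left (le_of_lt this) (le_of_lt h1t)
    _ = ε * (1-t) := mul_comm _ _

/-- the real analysis lemma (blow up case). -/
theorem stmt0 (g h : ℝ → ℝ)
    (hgm : Measurable g) (hhm : Measurable h)
    (hgb : ∃ B, ∀ t ∈ Set.Ioo (0:ℝ) 1, |g t| ≤ B)
    (hhb : ∃ B, ∀ t ∈ Set.Ioo (0:ℝ) 1, |h t| ≤ B)
    (hg0 : ∀ t ∈ Set.Ioo (0:ℝ) 1, 0 ≤ g t)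
    (hgavg : Tendsto (fun t => (1 / (1 - t)) * ∫ s in Set.Ioc t 1, g s)
      (nhdsWithin 1 (Set.Iio 1)) (nhds 0))
    (hhavg : Tendsto (fun t => (1 / (1 - t)) * ∫ s in Set.Ioc t 1, h s)
      (nhdsWithin 1 (Set.Iio 1)) (nhds 0)) :
    ∃ lam : ℝ → ℝ, (∀ t ∈ Set.Ioo (0:ℝ) 1, 0 < lam t) ∧
      MonotoneOn lam (Set.Ioo (0:ℝ) 1) ∧
      Tendsto lam (nhdsWithin 1 (Set.Iio 1)) atTop ∧
      ∃ tt : ℕ → ℝ, (∀ k, tt k ∈ Set.Ioo (0:ℝ) 1) ∧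
        Tendsto tt atTop (nhds 1) ∧
        ∀ ε > (0:ℝ), ∀ᶠ k in atTop, ∀ τ ∈ Set.Ioo (0:ℝ) (1 - tt k),
          (1 / τ) * ∫ s in Set.Ioc (tt k) (tt k + τ), (lam s * g s + h s) ≤ ε := by
  -- thresholds for g
  have hGex : ∀ n : ℕ, ∃ c : ℝ, 0 < c ∧ c < 1 ∧ ∀ t, c ≤ t → t < 1 →
      |∫ s in Set.Ioc t 1, g s| ≤ (1/4)^n * (1 - t) := by
    intro n
    exact avg_extract _ hgavg ((1/4)^n) (by positivity)
  choose u hu0 hu1 hu2 using hGex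
  -- the sequence s
  set s : ℕ → ℝ := fun n => Nat.rec (max (u 0) (1/2))
    (fun n sn => max (u (n+1)) ((sn+1)/2)) n with hs_def
  have hs_succ : ∀ n, s (n+1) = max (u (n+1)) ((s n + 1)/2) := fun n => rfl
  have hs1 : ∀ n, s n < 1 := by
    intro n; induction n with
    | zero => exact max_lt (hu1 0) (by norm_num)
    | succ n ih => rw [hs_succ]; exact max_lt (hu1 (n+1)) (by linarith)
  have hs0 : ∀ n, 0 < s n := by
    intro n; cases n with
    | zero => exact lt_of_lt_of_le (hu0 0) (le_max_left _ _)
    | succ n => exact lt_of_lt_of_le (hu0 (n+1)) (by rw [hs_succ]; exact le_max_left _ _)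
  have hs_lt : ∀ n, s n < s (n+1) := by
    intro n
    have := hs1 n
    calc s n < (s n + 1)/2 := by linarith
      _ ≤ s (n+1) := by rw [hs_succ]; exact le_max_right _ _
  have hs_mono : StrictMono s := strictMono_nat_of_lt_succ hs_lt
  have hs_half : ∀ n, 1 - s (n+1) ≤ (1 - s n)/2 := by
    intro n
    have : (s n + 1)/2 ≤ s (n+1) := by rw [hs_succ]; exact le_max_right _ _
    linarith
  have hs_decay : ∀ n, 1 - s n ≤ (1/2)^n := by
    intro n; induction n with
    | zero => have := hs0 0; simp; linarith [le_max_right (u 0) (1/2:ℝ)]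
    | succ n ih =>
        have := hs_half n
        rw [pow_succ]
        nlinarith
  -- property of s: tail average bound for g
  have hsu : ∀ n, u n ≤ s n := by
    intro n; cases n with
    | zero => exact le_max_left _ _
    | succ n => rw [hs_succ]; exact le_max_left _ _
  have hsG : ∀ n, ∀ t, s n ≤ t → t < 1 →
      (∫ x in Set.Ioc t 1, g x) ≤ (1/4)^n * (1 - t) := by
    intro n t hst ht1
    exact le_trans (le_abs_self _) (hu2 n t (le_trans (hsu n) hst) ht1)
  -- N and lam
  have exN : ∀ t : ℝ, t < 1 → ∃ n, t < s n := by
    intro t ht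
    obtain ⟨n, hn⟩ := exists_pow_lt_of_lt_one (by linarith : (0:ℝ) < 1 - t) (by norm_num : (1/2:ℝ) < 1)
    exact ⟨n, by have := hs_decay n; linarith⟩
  set N : ℝ → ℕ := fun t => if h : t < 1 then Nat.find (exN t h) else 0 with hN_def
  have hN_iff : ∀ t (ht : t < 1) (k : ℕ), N t ≤ k ↔ t < s k := by
    intro t ht k
    rw [hN_def]; simp only [dif_pos ht]
    constructor
    · intro hk
      exact lt_of_lt_of_le (Nat.find_spec (exN t ht)) (hs_mono.monotone hk)
    · intro hk; exact Nat.find_le hk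
  have hN_spec : ∀ t (ht : t < 1), t < s (N t) := by
    intro t ht; exact (hN_iff t ht (N t)).mp le_rfl
  have hN_ge : ∀ t (ht : t < 1) (k : ℕ), s k ≤ t → k < N t := by
    intro t ht k hk
    by_contra hc
    push_neg at hc
    exact absurd (lt_of_lt_of_le (hN_spec t ht) (hs_mono.monotone hc)) (not_lt.mpr hk)
  have hN_pred : ∀ t (ht : t < 1), 1 ≤ N t → s (N t - 1) ≤ t := by
    intro t ht h1
    by_contra hc
    push_neg at hc
    have := (hN_iff t ht (N t - 1)).mpr hc
    omega
  set lam : ℝ → ℝ := fun t => (2:ℝ) ^ (N t) with hlam_def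
  have hlam_pos : ∀ t, 0 < lam t := fun t => by positivity
  have hN_mono : ∀ ⦃a b : ℝ⦄, a < 1 → b < 1 → a ≤ b → N a ≤ N b := by
    intro a b ha hb hab
    rw [hN_iff a ha]
    exact lt_of_le_of_lt hab (hN_spec b hb)
  have hlam_mono : MonotoneOn lam (Set.Ioo (0:ℝ) 1) := by
    intro a ha b hb hab
    exact pow_le_pow_right₀ (by norm_num) (hN_mono ha.2 hb.2 hab)
  have hlam_tendsto : Tendsto lam (nhdsWithin 1 (Set.Iio 1)) atTop := by
    rw [tendsto_atTop]
    intro M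
    obtain ⟨n, hn⟩ := pow_unbounded_of_one_lt M (by norm_num : (1:ℝ) < 2)
    filter_upwards [Ioo_mem_nhdsLT_of_mem (⟨hs1 n, le_refl 1⟩ : (1:ℝ) ∈ Set.Ioc (s n) 1)] with t ht
    have htn : n < N t := hN_ge t ht.2 n (le_of_lt ht.1)
    calc M ≤ 2^n := le_of_lt hn
      _ ≤ lam t := pow_le_pow_right₀ (by norm_num) (le_of_lt htn)
  -- measurability of N and lam
  have hNmeas : Measurable N := by
    apply measurable_to_countable'
    intro k
    cases k with
    | zero =>
      have : N ⁻¹' {0} = Set.Iio (s 0) ∪ Set.Ici 1 := by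
        ext t
        by_cases ht : t < 1
        · simp only [Set.mem_preimage, Set.mem_singleton_iff, Set.mem_union, Set.mem_Iio,
            Set.mem_Ici]
          constructor
          · intro h0
            exact Or.inl ((hN_iff t ht 0).mp (le_of_eq h0))
          · intro hc
            rcases hc with hc | hc
            · exact Nat.le_zero.mp ((hN_iff t ht 0).mpr hc)
            · linarith
        · simp only [Set.mem_preimage, Set.mem_singleton_iff, Set.mem_union, Set.mem_Iio,
            Set.mem_Ici]
          rw [hN_def]
          simp only [dif_neg ht]
          simp only [true_iff]
          right; linarith
      rw [this]
      exact (measurableSet_Iio.union measurableSet_Ici)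
    | succ k =>
      have : N ⁻¹' {k+1} = Set.Ico (s k) (s (k+1)) := by
        ext t
        by_cases ht : t < 1
        · simp only [Set.mem_preimage, Set.mem_singleton_iff, Set.mem_Ico]
          constructor
          · intro h0
            constructor
            · by_contra hc
              push_neg at hc
              have := (hN_iff t ht k).mpr hc
              omega
            · have := (hN_iff t ht (k+1)).mp (le_of_eq h0)
              exact this
          · intro ⟨h1, h2⟩
            have ha := (hN_iff t ht (k+1)).mpr h2
            have hb := hN_ge t ht k h1
            omega
        · simp only [Set.mem_preimage, Set.mem_singleton_iff, Set.mem_Ico]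
          rw [hN_def]
          simp only [dif_neg ht]
          constructor
          · omega
          · intro ⟨h1, h2⟩
            have := hs1 (k+1); push_neg at ht; exfalso; linarith
      rw [this]
      exact measurableSet_Ico
  have hlamm : Measurable lam := by
    have : lam = (fun n : ℕ => (2:ℝ)^n) ∘ N := rfl
    rw [this]
    exact measurable_from_nat.comp hNmeas
  -- ae membership helper
  have hmemae : ∀ S : Set ℝ, MeasurableSet S → S ⊆ Set.Icc 0 1 →
      ∀ᵐ x ∂(volume.restrict S), x ∈ Set.Ioo (0:ℝ) 1 := by
    intro S hSm hS
    have hsing : ∀ c : ℝ, ∀ᵐ x : ℝ ∂volume, x ≠ c := by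
      intro c
      rw [ae_iff]
      have : {x : ℝ | ¬ x ≠ c} = {c} := by ext x; simp
      rw [this]
      exact measure_singleton c
    have h0 := hsing 0
    have h1 := hsing 1
    filter_upwards [ae_restrict_mem hSm, ae_restrict_of_ae h0, ae_restrict_of_ae h1]
      with x hx hx0 hx1
    have := hS hx
    exact ⟨lt_of_le_of_ne this.1 (Ne.symm hx0), lt_of_le_of_ne this.2 hx1⟩
  -- integrability of g, h
  obtain ⟨Bg, hBg⟩ := hgb
  obtain ⟨Bh, hBh⟩ := hhb
  have hIccsub : Set.Icc (0:ℝ) 1 ⊆ Set.Icc (0:ℝ) 1 := le_refl _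
  have hbdd_int : ∀ (φ : ℝ → ℝ), Measurable φ → ∀ C, (∀ t ∈ Set.Ioo (0:ℝ) 1, |φ t| ≤ C) →
      IntegrableOn φ (Set.Icc 0 1) volume := by
    intro φ hφ C hC
    refine ⟨hφ.aestronglyMeasurable.restrict, ?_⟩
    apply HasFiniteIntegral.restrict_of_bounded (C := C)
    · rw [Real.volume_Icc]; exact ENNReal.ofReal_lt_top
    · filter_upwards [hmemae _ measurableSet_Icc hIccsub] with x hx
      rw [Real.norm_eq_abs]; exact hC x hx
  have hgInt : IntegrableOn g (Set.Icc 0 1) volume := hbdd_int g hgm Bg hBg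
  have hhInt : IntegrableOn h (Set.Icc 0 1) volume := hbdd_int h hhm Bh hBh
  -- lintegral of g vs Bochner
  have hglint : ∀ t : ℝ, 0 ≤ t → t ≤ 1 →
      (∫⁻ x in Set.Ioc t 1, ENNReal.ofReal (g x)) = ENNReal.ofReal (∫ x in Set.Ioc t 1, g x) := by
    intro t ht0 ht1
    refine (ofReal_integral_eq_lintegral_ofReal ?_ ?_).symm
    · exact hgInt.mono_set (fun x hx => ⟨le_trans ht0 (le_of_lt hx.1), hx.2⟩)
    · filter_upwards [hmemae _ measurableSet_Ioc
        (fun x hx => ⟨le_trans ht0 (le_of_lt hx.1), hx.2⟩)] with x hx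
      exact hg0 x hx
  -- the ENNReal-valued integrand
  set lg : ℝ → ENNReal := fun u => ENNReal.ofReal (lam u * g u) with hlg_def
  have hlgm : Measurable lg := (hlamm.mul hgm).ennreal_ofReal
  -- pointwise bound on lam
  have hlam_le : ∀ (m : ℕ) (x : ℝ), x ≤ s m → lam x ≤ 2^(m+1) := by
    intro m x hx
    have hx1 : x < 1 := lt_of_le_of_lt hx (hs1 m)
    have : N x ≤ m + 1 := (hN_iff x hx1 (m+1)).mpr (lt_of_le_of_lt hx (hs_lt m))
    exact pow_le_pow_right₀ (by norm_num) this
  -- piece estimate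
  have hpiece : ∀ (a : ℝ) (m n : ℕ), 0 ≤ a → a < 1 → a ≤ s m → s n ≤ a →
      (∫⁻ x in Set.Ioc a (s m), lg x) ≤
        ENNReal.ofReal ((2:ℝ)^(m+1) * ((1/4)^n * (1-a))) := by
    intro a m n ha0 ha1 ham hna
    have step1 : (∫⁻ x in Set.Ioc a (s m), lg x) ≤
        ∫⁻ x in Set.Ioc a (s m), ENNReal.ofReal ((2:ℝ)^(m+1)) * ENNReal.ofReal (g x) := by
      apply setLIntegral_mono (by exact (measurable_const.mul hgm.ennreal_ofReal))
      intro x hx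
      have hx01 : x ∈ Set.Ioo (0:ℝ) 1 :=
        ⟨lt_of_le_of_lt ha0 hx.1, lt_of_le_of_lt hx.2 (hs1 m)⟩
      rw [hlg_def, ← ENNReal.ofReal_mul (by positivity)]
      apply ENNReal.ofReal_le_ofReal
      exact mul_le_mul_of_nonneg_right (hlam_le m x hx.2) (hg0 x hx01)
    have step2 : (∫⁻ x in Set.Ioc a (s m), ENNReal.ofReal ((2:ℝ)^(m+1)) * ENNReal.ofReal (g x))
        = ENNReal.ofReal ((2:ℝ)^(m+1)) * ∫⁻ x in Set.Ioc a (s m), ENNReal.ofReal (g x) :=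
      lintegral_const_mul _ hgm.ennreal_ofReal
    have step3 : (∫⁻ x in Set.Ioc a (s m), ENNReal.ofReal (g x)) ≤
        ENNReal.ofReal ((1/4)^n * (1-a)) := by
      calc (∫⁻ x in Set.Ioc a (s m), ENNReal.ofReal (g x))
          ≤ ∫⁻ x in Set.Ioc a 1, ENNReal.ofReal (g x) :=
            lintegral_mono_set (Set.Ioc_subset_Ioc_right (le_of_lt (hs1 m)))
        _ = ENNReal.ofReal (∫ x in Set.Ioc a 1, g x) := hglint a ha0 (le_of_lt ha1)
        _ ≤ ENNReal.ofReal ((1/4)^n * (1-a)) :=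
            ENNReal.ofReal_le_ofReal (hsG n a hna ha1)
    calc (∫⁻ x in Set.Ioc a (s m), lg x)
        ≤ ENNReal.ofReal ((2:ℝ)^(m+1)) * ∫⁻ x in Set.Ioc a (s m), ENNReal.ofReal (g x) := by
          rw [← step2]; exact step1
      _ ≤ ENNReal.ofReal ((2:ℝ)^(m+1)) * ENNReal.ofReal ((1/4)^n * (1-a)) := by
          exact mul_le_mul_right step3 _
      _ = ENNReal.ofReal ((2:ℝ)^(m+1) * ((1/4)^n * (1-a))) := by
          rw [← ENNReal.ofReal_mul (by positivity)]
  -- inductive claim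
  have hclaim : ∀ t, s 0 ≤ t → t < 1 → ∀ j : ℕ,
      (∫⁻ x in Set.Ioc t (s (N t + j)), lg x) ≤
        ENNReal.ofReal ((16 * (1/2)^(N t) - 8 * (1/2)^(N t + j)) * (1-t)) := by
    intro t hst ht1
    have ht0 : (0:ℝ) ≤ t := le_trans (le_of_lt (hs0 0)) hst
    have hN1 : 1 ≤ N t := hN_ge t ht1 0 hst
    intro j
    induction j with
    | zero =>
      obtain ⟨n, hn⟩ : ∃ n, N t = n + 1 := ⟨N t - 1, by omega⟩
      have hb := hpiece t (N t) (N t - 1) ht0 ht1 (le_of_lt (hN_spec t ht1))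
        (hN_pred t ht1 hN1)
      have heq : (2:ℝ)^(N t + 1) * ((1/4)^(N t - 1) * (1-t))
          = (16 * (1/2)^(N t) - 8 * (1/2)^(N t + 0)) * (1-t) := by
        rw [hn]
        simp only [Nat.add_sub_cancel, add_zero]
        have e1 : ((2:ℝ))^n * (1/4)^n = (1/2)^n := by rw [← mul_pow]; norm_num
        linear_combination (4*(1-t)) * e1
      rw [← heq]
      exact hb
    | succ j ih =>
      have hts : t ≤ s (N t + j) :=
        le_trans (le_of_lt (hN_spec t ht1)) (hs_mono.monotone (by omega))
      have hsplit : Set.Ioc t (s (N t + (j+1))) =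
          Set.Ioc t (s (N t + j)) ∪ Set.Ioc (s (N t + j)) (s (N t + j + 1)) := by
        rw [Set.Ioc_union_Ioc_eq_Ioc hts (le_of_lt (hs_lt (N t + j)))]
        norm_num [Nat.add_assoc]
      rw [hsplit, lintegral_union measurableSet_Ioc (Set.Ioc_disjoint_Ioc_of_le le_rfl)]
      have hb2 := hpiece (s (N t + j)) (N t + j + 1) (N t + j)
        (le_of_lt (hs0 _)) (hs1 _) (le_of_lt (hs_lt _)) le_rfl
      have hb2' : (∫⁻ x in Set.Ioc (s (N t + j)) (s (N t + j + 1)), lg x) ≤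
          ENNReal.ofReal (4 * (1/2)^(N t + j) * (1-t)) := by
        refine le_trans hb2 (ENNReal.ofReal_le_ofReal ?_)
        have h1 : 1 - s (N t + j) ≤ 1 - t := by linarith
        have hc : (2:ℝ)^(N t + j + 1 + 1) * (1/4)^(N t + j) = 4 * (1/2)^(N t + j) := by
          rw [pow_succ, pow_succ]
          have h4 : ((1:ℝ)/4)^(N t + j) = (1/2)^(N t + j) * (1/2)^(N t + j) := by
            rw [← mul_pow]; norm_num
          have h24 : ((2:ℝ))^(N t + j) * (1/2)^(N t + j) = 1 := by
            rw [← mul_pow]; norm_num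
          rw [h4]
          nlinarith [pow_pos (by norm_num : (0:ℝ) < 1/2) (N t + j),
            pow_pos (by norm_num : (0:ℝ) < 2) (N t + j)]
        calc (2:ℝ)^(N t + j + 1 + 1) * ((1/4)^(N t + j) * (1 - s (N t + j)))
            ≤ (2:ℝ)^(N t + j + 1 + 1) * ((1/4)^(N t + j) * (1 - t)) := by
              apply mul_le_mul_of_nonneg_left _ (by positivity)
              apply mul_le_mul_of_nonneg_left h1 (by positivity)
          _ = 4 * (1/2)^(N t + j) * (1-t) := by rw [← mul_assoc, hc]
      calc (∫⁻ x in Set.Ioc t (s (N t + j)), lg x)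
            + (∫⁻ x in Set.Ioc (s (N t + j)) (s (N t + j + 1)), lg x)
          ≤ ENNReal.ofReal ((16 * (1/2)^(N t) - 8 * (1/2)^(N t + j)) * (1-t))
            + ENNReal.ofReal (4 * (1/2)^(N t + j) * (1-t)) := add_le_add ih hb2'
        _ = ENNReal.ofReal ((16 * (1/2)^(N t) - 8 * (1/2)^(N t + j)) * (1-t)
            + 4 * (1/2)^(N t + j) * (1-t)) := by
            have h1t : (0:ℝ) ≤ 1 - t := by linarith
            rw [← ENNReal.ofReal_add]
            · have hle : ((1:ℝ)/2)^(N t + j) ≤ (1/2)^(N t) :=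
                pow_le_pow_of_le_one (by norm_num) (by norm_num) (by omega)
              nlinarith [pow_pos (by norm_num : (0:ℝ) < 1/2) (N t + j),
                pow_pos (by norm_num : (0:ℝ) < 1/2) (N t)]
            · have : (0:ℝ) ≤ (1/2)^(N t + j) := by positivity
              nlinarith
        _ = ENNReal.ofReal ((16 * (1/2)^(N t) - 8 * (1/2)^(N t + (j+1))) * (1-t)) := by
            congr 1
            rw [show N t + (j+1) = (N t + j) + 1 by omega, pow_succ]
            ring
  -- limit: lintegral over Ioo t 1
  have hIoo : ∀ t, s 0 ≤ t → t < 1 →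
      (∫⁻ x in Set.Ioo t 1, lg x) ≤ ENNReal.ofReal (16 * (1/2)^(N t) * (1-t)) := by
    intro t hst ht1
    set F : ℕ → ℝ → ENNReal := fun j => (Set.Ioc t (s (N t + j))).indicator lg with hF_def
    have hFmeas : ∀ j, Measurable (F j) := fun j => hlgm.indicator measurableSet_Ioc
    have hFmono : Monotone F := by
      intro i j hij
      exact Set.indicator_le_indicator_of_subset
        (Set.Ioc_subset_Ioc_right (hs_mono.monotone (by omega))) (fun x => zero_le)
    have hFsup : ∀ x, (⨆ j, F j x) = (Set.Ioo t 1).indicator lg x := by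
      intro x
      by_cases hx : x ∈ Set.Ioo t 1
      · rw [Set.indicator_of_mem hx]
        apply le_antisymm
        · exact iSup_le fun j => Set.indicator_le_self _ _ x
        · obtain ⟨n, hn⟩ := exN x hx.2
          have hxs : x ≤ s (N t + n) :=
            le_of_lt (lt_of_lt_of_le hn (hs_mono.monotone (by omega)))
          have hxmem : x ∈ Set.Ioc t (s (N t + n)) := ⟨hx.1, hxs⟩
          have hFx : F n x = lg x := Set.indicator_of_mem hxmem lg
          calc lg x = F n x := hFx.symm
            _ ≤ ⨆ j, F j x := le_iSup (fun j => F j x) n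
      · rw [Set.indicator_of_notMem hx]
        apply le_antisymm _ zero_le
        apply iSup_le
        intro j
        have hnm : x ∉ Set.Ioc t (s (N t + j)) := fun hmem =>
          hx ⟨hmem.1, lt_of_le_of_lt hmem.2 (hs1 _)⟩
        have hz : F j x = 0 := Set.indicator_of_notMem hnm lg
        rw [hz]
    have h1 : (∫⁻ x in Set.Ioo t 1, lg x) = ⨆ j, ∫⁻ x in Set.Ioc t (s (N t + j)), lg x := by
      rw [← lintegral_indicator measurableSet_Ioo]
      rw [lintegral_congr (fun x => (hFsup x).symm)]
      rw [lintegral_iSup hFmeas hFmono]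
      exact iSup_congr fun j => lintegral_indicator measurableSet_Ioc _
    rw [h1]
    apply iSup_le
    intro j
    refine le_trans (hclaim t hst ht1 j) (ENNReal.ofReal_le_ofReal ?_)
    have h1t : (0:ℝ) ≤ 1 - t := by linarith
    have hp : (0:ℝ) ≤ (1/2)^(N t + j) := by positivity
    nlinarith
  -- integrability of lam * g
  have hIoosub : Set.Ioo (s 0) 1 ⊆ Set.Icc (0:ℝ) 1 := fun x hx =>
    ⟨le_trans (le_of_lt (hs0 0)) (le_of_lt hx.1), le_of_lt hx.2⟩
  have hLint1 : IntegrableOn (fun x => lam x * g x) (Set.Ioo (s 0) 1) volume := by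
    refine ⟨(hlamm.mul hgm).aestronglyMeasurable.restrict, ?_⟩
    have hae : 0 ≤ᵐ[volume.restrict (Set.Ioo (s 0) 1)] (fun x => lam x * g x) := by
      filter_upwards [hmemae _ measurableSet_Ioo hIoosub] with x hx
      exact mul_nonneg (le_of_lt (hlam_pos x)) (hg0 x hx)
    rw [hasFiniteIntegral_iff_ofReal hae]
    exact lt_of_le_of_lt (hIoo (s 0) le_rfl (hs1 0)) ENNReal.ofReal_lt_top
  have hsingInt : ∀ (φ : ℝ → ℝ) (c : ℝ), IntegrableOn φ {c} volume := by
    intro φ c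
    rw [integrableOn_singleton_iff]
    right
    rw [measure_singleton]
    exact ENNReal.zero_lt_top
  have hLint : IntegrableOn (fun x => lam x * g x) (Set.Icc (s 0) 1) volume := by
    apply IntegrableOn.mono_set (t := {s 0} ∪ (Set.Ioo (s 0) 1 ∪ {(1:ℝ)}))
    · exact (hsingInt _ _).union (hLint1.union (hsingInt _ _))
    · intro x hx
      rcases eq_or_lt_of_le hx.1 with hh | hh
      · left; simp [← hh]
      · rcases eq_or_lt_of_le hx.2 with h2 | h2
        · right; right; simp [h2]
        · right; left; exact ⟨hh, h2⟩
  -- Bochner tail bound for lam * g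
  have hLbound : ∀ t, s 0 ≤ t → t < 1 →
      (∫ x in Set.Ioc t 1, lam x * g x) ≤ 16 * (1/2)^(N t) * (1-t) := by
    intro t hst ht1
    have hsub : Set.Ioo t 1 ⊆ Set.Icc (0:ℝ) 1 := fun x hx =>
      ⟨le_trans (le_trans (le_of_lt (hs0 0)) hst) (le_of_lt hx.1), le_of_lt hx.2⟩
    have hae : 0 ≤ᵐ[volume.restrict (Set.Ioo t 1)] (fun x => lam x * g x) := by
      filter_upwards [hmemae _ measurableSet_Ioo hsub] with x hx
      exact mul_nonneg (le_of_lt (hlam_pos x)) (hg0 x hx)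
    rw [integral_Ioc_eq_integral_Ioo,
      integral_eq_lintegral_of_nonneg_ae hae (hlamm.mul hgm).aestronglyMeasurable.restrict]
    calc (∫⁻ x in Set.Ioo t 1, ENNReal.ofReal (lam x * g x)).toReal
        ≤ (ENNReal.ofReal (16 * (1/2)^(N t) * (1-t))).toReal :=
          ENNReal.toReal_mono ENNReal.ofReal_ne_top (hIoo t hst ht1)
      _ = 16 * (1/2)^(N t) * (1-t) := ENNReal.toReal_ofReal (by
          have : (0:ℝ) ≤ 1 - t := by linarith
          positivity)
  -- f and integrability
  set f : ℝ → ℝ := fun x => lam x * g x + h x with hf_def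
  have hfInt : IntegrableOn f (Set.Icc (s 0) 1) volume :=
    hLint.add (hhInt.mono_set (Set.Icc_subset_Icc_left (le_of_lt (hs0 0))))
  have hfIntSub : ∀ a b : ℝ, a ∈ Set.Icc (s 0) 1 → b ∈ Set.Icc (s 0) 1 →
      IntegrableOn f (Set.Ioc a b) volume := by
    intro a b ha hb
    exact hfInt.mono_set (fun x hx => ⟨le_trans ha.1 (le_of_lt hx.1), le_trans hx.2 hb.2⟩)
  -- tail splitting
  have hsplitT : ∀ t, s 0 ≤ t → t ≤ 1 →
      (∫ x in Set.Ioc t 1, f x) = (∫ x in Set.Ioc t 1, lam x * g x) + ∫ x in Set.Ioc t 1, h x := by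
    intro t hst ht1
    apply integral_add
    · exact hLint.mono_set (fun x hx => ⟨le_trans hst (le_of_lt hx.1), hx.2⟩)
    · apply hhInt.mono_set
      intro x hx
      exact ⟨le_trans (le_trans (le_of_lt (hs0 0)) hst) (le_of_lt hx.1), hx.2⟩
  -- tail bound for f
  have hTbound : ∀ ε : ℝ, 0 < ε → ∃ c, s 0 ≤ c ∧ c < 1 ∧ ∀ t, c ≤ t → t < 1 →
      (∫ x in Set.Ioc t 1, f x) ≤ ε * (1-t) := by
    intro ε hε
    obtain ⟨n, hn⟩ := exists_pow_lt_of_lt_one (show (0:ℝ) < ε/32 by linarith)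
      (show (1:ℝ)/2 < 1 by norm_num)
    obtain ⟨ch, hch0, hch1, hch2⟩ := avg_extract _ hhavg (ε/2) (by linarith)
    refine ⟨max (s n) ch, le_trans (hs_mono.monotone (Nat.zero_le n)) (le_max_left _ _),
      max_lt (hs1 n) hch1, ?_⟩
    intro t hct ht1
    have hst : s 0 ≤ t :=
      le_trans (hs_mono.monotone (Nat.zero_le n)) (le_trans (le_max_left _ _) hct)
    have hsnt : s n ≤ t := le_trans (le_max_left _ _) hct
    have hNtn : n < N t := hN_ge t ht1 n hsnt
    have hpow : ((1:ℝ)/2)^(N t) ≤ (1/2)^n :=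
      pow_le_pow_of_le_one (by norm_num) (by norm_num) (le_of_lt hNtn)
    have hL := hLbound t hst ht1
    have hH := hch2 t (le_trans (le_max_right _ _) hct) ht1
    have hH' : (∫ x in Set.Ioc t 1, h x) ≤ (ε/2) * (1-t) := le_trans (le_abs_self _) hH
    rw [hsplitT t hst (le_of_lt ht1)]
    have h1t : (0:ℝ) ≤ 1 - t := by linarith
    have : 16 * ((1:ℝ)/2)^(N t) ≤ ε/2 := by nlinarith
    nlinarith
  -- the minimization argument
  have hmin : ∀ k : ℕ, ∃ T : ℝ, T ∈ Set.Ioo (0:ℝ) 1 ∧ 1 - ((k:ℝ)+1)⁻¹ ≤ T ∧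
      ∀ τ ∈ Set.Ioo (0:ℝ) (1 - T),
        (∫ x in Set.Ioc T (T + τ), f x) ≤ ((k:ℝ)+1)⁻¹ * τ := by
    intro k
    set ε : ℝ := ((k:ℝ)+1)⁻¹ with hε_def
    have hεpos : 0 < ε := by positivity
    obtain ⟨c, hc0, hc1, hc2⟩ := hTbound (ε/2) (by linarith)
    set a : ℝ := max c (1 - ε) with ha_def
    have ha0 : s 0 ≤ a := le_trans hc0 (le_max_left _ _)
    have ha1 : a < 1 := max_lt hc1 (by linarith)
    set b : ℝ := (a+1)/2 with hb_def
    have hab : a < b := by rw [hb_def]; linarith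
    have hb1 : b < 1 := by rw [hb_def]; linarith
    have hb0 : s 0 ≤ b := le_trans ha0 (le_of_lt hab)
    set ψ : ℝ → ℝ := fun r => (∫ x in Set.Ioc r 1, f x) + ε * r with hψ_def
    have hone : (1:ℝ) ∈ Set.Icc (s 0) 1 := ⟨le_of_lt (hs1 0), le_rfl⟩
    have hcont : ContinuousOn ψ (Set.Icc b 1) := by
      have hprim : ContinuousOn (fun r => ∫ x in Set.Ioc (s 0) r, f x) (Set.Icc (s 0) 1) :=
        intervalIntegral.continuousOn_primitive hfInt
      have heq : Set.EqOn ψ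
          (fun r => ((∫ x in Set.Ioc (s 0) 1, f x) - ∫ x in Set.Ioc (s 0) r, f x) + ε * r)
          (Set.Icc b 1) := by
        intro r hr
        have hr0 : s 0 ≤ r := le_trans hb0 hr.1
        have hsplit : (∫ x in Set.Ioc (s 0) 1, f x)
            = (∫ x in Set.Ioc (s 0) r, f x) + ∫ x in Set.Ioc r 1, f x := by
          rw [← Set.Ioc_union_Ioc_eq_Ioc hr0 hr.2,
            setIntegral_union (Set.Ioc_disjoint_Ioc_of_le le_rfl) measurableSet_Ioc
              (hfIntSub _ _ ⟨le_rfl, le_of_lt (hs1 0)⟩ ⟨hr0, hr.2⟩)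
              (hfIntSub _ _ ⟨hr0, hr.2⟩ hone)]
        simp only [hψ_def]
        rw [hsplit]
        ring
      apply ContinuousOn.congr _ heq
      apply ContinuousOn.add
      · exact ContinuousOn.sub continuousOn_const
          (hprim.mono (Set.Icc_subset_Icc_left hb0))
      · exact (continuous_const.mul continuous_id).continuousOn
    obtain ⟨T, hTmem, hTmin⟩ :=
      isCompact_Icc.exists_isMinOn ⟨b, le_rfl, le_of_lt hb1⟩ hcont
    have hψ1 : ψ 1 = ε := by
      simp only [hψ_def]
      rw [Set.Ioc_self]
      simp
    have hψb : ψ b < ψ 1 := by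
      have hTb := hc2 b (le_trans (le_max_left _ _) (le_of_lt hab)) hb1
      rw [hψ1]
      simp only [hψ_def]
      nlinarith
    have hT1 : T < 1 := by
      rcases lt_or_eq_of_le hTmem.2 with hh | hh
      · exact hh
      · exfalso
        have hmb := hTmin ⟨le_rfl, le_of_lt hb1⟩
        rw [hh] at hmb
        simp only [Set.mem_setOf_eq] at hmb
        linarith [hψb, hmb]
    have hTs0 : s 0 ≤ T := le_trans hb0 hTmem.1
    refine ⟨T, ⟨lt_of_lt_of_le (hs0 0) hTs0, hT1⟩, ?_, ?_⟩
    · calc 1 - ε ≤ a := le_max_right c (1 - ε)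
        _ ≤ b := le_of_lt hab
        _ ≤ T := hTmem.1
    · intro τ hτ
      have hτ0 : (0:ℝ) < τ := hτ.1
      have hr1 : T + τ < 1 := by have := hτ.2; linarith
      have hrb : b ≤ T + τ := le_trans hTmem.1 (by linarith)
      have hmin2 := hTmin ⟨hrb, le_of_lt hr1⟩
      simp only [Set.mem_setOf_eq, hψ_def] at hmin2
      have hsplit : (∫ x in Set.Ioc T 1, f x)
          = (∫ x in Set.Ioc T (T+τ), f x) + ∫ x in Set.Ioc (T+τ) 1, f x := by
        rw [← Set.Ioc_union_Ioc_eq_Ioc (by linarith : T ≤ T + τ) (le_of_lt hr1),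
          setIntegral_union (Set.Ioc_disjoint_Ioc_of_le le_rfl) measurableSet_Ioc
            (hfIntSub _ _ ⟨hTs0, le_of_lt hT1⟩ ⟨by linarith, le_of_lt hr1⟩)
            (hfIntSub _ _ ⟨by linarith, le_of_lt hr1⟩ hone)]
      have hring : ε * (T + τ) = ε * T + ε * τ := by ring
      linarith [hsplit, hmin2]
  choose tt htt1 htt2 htt3 using hmin
  have hinv : Tendsto (fun k : ℕ => ((k:ℝ)+1)⁻¹) atTop (nhds 0) := by
    have := tendsto_one_div_add_atTop_nhds_zero_nat (𝕜 := ℝ)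
    simpa [one_div] using this
  have httend : Tendsto tt atTop (nhds 1) := by
    apply tendsto_of_tendsto_of_tendsto_of_le_of_le
      (g := fun k : ℕ => 1 - ((k:ℝ)+1)⁻¹) (h := fun _ : ℕ => (1:ℝ))
    · have h2 : Tendsto (fun k : ℕ => 1 - ((k:ℝ)+1)⁻¹) atTop (nhds (1 - 0)) :=
        tendsto_const_nhds.sub hinv
      simpa using h2
    · exact tendsto_const_nhds
    · exact fun k => htt2 k
    · exact fun k => le_of_lt (htt1 k).2
  refine ⟨lam, fun t _ => hlam_pos t, hlam_mono, hlam_tendsto, tt, htt1, httend, ?_⟩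
  intro ε hε
  have hev : ∀ᶠ k : ℕ in atTop, ((k:ℝ)+1)⁻¹ < ε := hinv.eventually_lt_const hε
  filter_upwards [hev] with k hk τ hτ
  have h3 := htt3 k τ hτ
  have hτ0 : 0 < τ := hτ.1
  have h4 : (1/τ) * (∫ x in Set.Ioc (tt k) (tt k + τ), f x)
      ≤ (1/τ) * (((k:ℝ)+1)⁻¹ * τ) := by
    apply mul_le_mul_of_nonneg_left h3 (by positivity)
  have heq2 : (1/τ) * (((k:ℝ)+1)⁻¹ * τ) = ((k:ℝ)+1)⁻¹ := by field_simp
  rw [heq2] at h4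
  calc (1/τ) * ∫ x in Set.Ioc (tt k) (tt k + τ), (lam x * g x + h x) ≤ ((k:ℝ)+1)⁻¹ := h4
    _ ≤ ε := le_of_lt hk
end

section
/- Let g : (0,1) → ℝ be a bounded nonnegative measurable function with (1/(1-t)) ∫_t^1 g(s) ds → 0 as t → 1⁻. Then there exists a positive monotone function λ : (0,1) → ℝ with λ(t) → ∞ as t → 1⁻, and an increasing sequence t_k → 1⁻, such that (1/(1-t_k)) ∫_{t_k}^1 λ(s) g(s) ds → 0 as k → ∞. -/
open MeasureTheory Set Filter Topology

/-- boosting the weight for the kinetic energy average (blow up case). -/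
theorem stmt1 (g : ℝ → ℝ) (hgm : Measurable g)
    (hgb : ∃ B, ∀ t ∈ Set.Ioo (0:ℝ) 1, |g t| ≤ B)
    (hg0 : ∀ t ∈ Set.Ioo (0:ℝ) 1, 0 ≤ g t)
    (hgavg : Tendsto (fun t => (1 / (1 - t)) * ∫ s in Set.Ioc t 1, g s)
      (nhdsWithin 1 (Set.Iio 1)) (nhds 0)) :
    ∃ lam : ℝ → ℝ, (∀ t ∈ Set.Ioo (0:ℝ) 1, 0 < lam t) ∧
      MonotoneOn lam (Set.Ioo (0:ℝ) 1) ∧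
      Tendsto lam (nhdsWithin 1 (Set.Iio 1)) atTop ∧
      ∃ tk : ℕ → ℝ, StrictMono tk ∧ (∀ k, tk k ∈ Set.Ioo (0:ℝ) 1) ∧
        Tendsto tk atTop (nhds 1) ∧
        Tendsto (fun k => (1 / (1 - tk k)) * ∫ s in Set.Ioc (tk k) 1, lam s * g s)
          atTop (nhds 0) := by
  obtain ⟨B, hB⟩ := hgb
  -- Step existence: at each stage we can pick the next point of the sequence
  have hstep : ∀ (k : ℕ) (a : {x : ℝ // x < 1}), ∃ b : {x : ℝ // x < 1},
      (a:ℝ) < (b:ℝ) ∧ 1 - 1/((k:ℝ)+1) < (b:ℝ) ∧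
      (1 / (1 - (b:ℝ))) * ∫ s in Set.Ioc (b:ℝ) 1, g s ≤ (1/2:ℝ)^k * (1/2)^k := by
    intro k a
    have hε : (0:ℝ) < (1/2:ℝ)^k * (1/2)^k := by positivity
    have h1 : ∀ᶠ b in 𝓝[<] (1:ℝ),
        (1 / (1 - b)) * ∫ s in Set.Ioc b 1, g s < (1/2:ℝ)^k * (1/2)^k :=
      hgavg.eventually (Iio_mem_nhds hε)
    have hmax : max (a:ℝ) (1 - 1/((k:ℝ)+1)) < 1 := by
      apply max_lt a.2
      have : (0:ℝ) < 1/((k:ℝ)+1) := by positivity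
      linarith
    have h2 : Set.Ioo (max (a:ℝ) (1 - 1/((k:ℝ)+1))) 1 ∈ 𝓝[<] (1:ℝ) :=
      Ioo_mem_nhdsLT_of_mem ⟨hmax, le_refl 1⟩
    obtain ⟨b, hb1, hb2⟩ := (h1.and h2).exists
    exact ⟨⟨b, hb2.2⟩, lt_of_le_of_lt (le_max_left _ _) hb2.1,
      lt_of_le_of_lt (le_max_right _ _) hb2.1, le_of_lt hb1⟩
  choose F hF1 hF2 hF3 using hstep
  set T : ℕ → {x : ℝ // x < 1} := fun k =>
    Nat.rec (motive := fun _ => {x : ℝ // x < 1}) ⟨1/2, by norm_num⟩ (fun k ih => F k ih) k with hT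
  set tk : ℕ → ℝ := fun k => (T (k+1) : ℝ) with htkdef
  have hTsucc : ∀ k, T (k+1) = F k (T k) := fun k => rfl
  have htk_mono : StrictMono tk := by
    apply strictMono_nat_of_lt_succ
    intro k
    have := hF1 (k+1) (T (k+1))
    rw [htkdef]
    simpa [hTsucc (k+1)] using this
  have htk_lt1 : ∀ k, tk k < 1 := fun k => (T (k+1)).2
  have hT_half : ∀ k, (1/2:ℝ) ≤ (T k : ℝ) := by
    intro k
    induction k with
    | zero => simp [hT]
    | succ k ih => rw [hTsucc k]; exact ih.trans (hF1 k (T k)).le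
  have htk_half : ∀ k, (1/2:ℝ) < tk k := by
    intro k
    have := hF1 k (T k)
    rw [htkdef]; simp only [hTsucc k]
    exact lt_of_le_of_lt (hT_half k) this
  have htk_mem : ∀ k, tk k ∈ Set.Ioo (0:ℝ) 1 :=
    fun k => ⟨by linarith [htk_half k], htk_lt1 k⟩
  have htk_lb : ∀ k : ℕ, 1 - 1/((k:ℝ)+1) < tk k := by
    intro k
    have := hF2 k (T k)
    rw [htkdef]; simp only [hTsucc k]
    exact this
  have htk_A : ∀ k, (1 / (1 - tk k)) * ∫ s in Set.Ioc (tk k) 1, g s ≤ (1/2:ℝ)^k * (1/2)^k := by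
    intro k
    have := hF3 k (T k)
    rw [htkdef]; simp only [hTsucc k]
    exact this
  have htk_tend : Tendsto tk atTop (𝓝 1) := by
    have hlow : Tendsto (fun k : ℕ => 1 - 1/((k:ℝ)+1)) atTop (𝓝 1) := by
      have := tendsto_one_div_add_atTop_nhds_zero_nat (𝕜 := ℝ)
      simpa using tendsto_const_nhds.sub this
    exact tendsto_of_tendsto_of_tendsto_of_le_of_le hlow tendsto_const_nhds
      (fun k => (htk_lb k).le) (fun k => (htk_lt1 k).le)
  -- The index function K and the weight lam
  have hex : ∀ s : ℝ, s < 1 → ∃ n, s < tk n := by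
    intro s hs
    obtain ⟨n, hn⟩ := exists_nat_one_div_lt (show (0:ℝ) < 1 - s by linarith)
    exact ⟨n, by have := htk_lb n; linarith⟩
  set K : ℝ → ℕ := fun s => sInf {n | s < tk n} with hKdef
  have hK_mem : ∀ s : ℝ, s < 1 → s < tk (K s) := fun s hs => Nat.sInf_mem (hex s hs)
  have hK_le : ∀ (s : ℝ) (n : ℕ), s < tk n → K s ≤ n := fun s n h => Nat.sInf_le h
  have hK_gt : ∀ (s : ℝ) (n : ℕ), s < 1 → tk n ≤ s → n < K s := by
    intro s n hs h
    by_contra hc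
    push_neg at hc
    exact absurd (hK_mem s hs) (not_lt.2 ((htk_mono.monotone hc).trans h))
  set lam : ℝ → ℝ := fun s => (2:ℝ)^(K s) with hlamdef
  have hlam_pos : ∀ t ∈ Set.Ioo (0:ℝ) 1, 0 < lam t := by
    intro t _; rw [hlamdef]; positivity
  have hlam_mono : MonotoneOn lam (Set.Ioo (0:ℝ) 1) := by
    intro s hs s' hs' hss'
    rw [hlamdef]
    simp only
    apply pow_le_pow_right₀ one_le_two
    exact hK_le s (K s') (lt_of_le_of_lt hss' (hK_mem s' hs'.2))
  have hlam_tend : Tendsto lam (𝓝[<] (1:ℝ)) atTop := by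
    rw [tendsto_atTop]
    intro b
    obtain ⟨N, hN⟩ := exists_nat_ge b
    filter_upwards [Ioo_mem_nhdsLT_of_mem
      (⟨htk_lt1 N, le_refl (1:ℝ)⟩ : (1:ℝ) ∈ Set.Ioc (tk N) 1)] with s hs
    have h1 : N < K s := hK_gt s N hs.2 hs.1.le
    have h2 : (K s : ℝ) ≤ (2:ℝ)^(K s) := by
      have := Nat.lt_two_pow_self (n := K s)
      exact_mod_cast this.le
    rw [hlamdef]
    calc b ≤ (N:ℝ) := hN
      _ ≤ (K s : ℝ) := by exact_mod_cast h1.le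
      _ ≤ (2:ℝ)^(K s) := h2
  -- measurability of K and lam
  have hempty : ∀ s : ℝ, 1 ≤ s → K s = 0 := by
    intro s hs
    have he : {n : ℕ | s < tk n} = ∅ := by
      ext n
      simp only [mem_setOf_eq, mem_empty_iff_false, iff_false, not_lt]
      exact (htk_lt1 n).le.trans hs
    simp only [hKdef, he, Nat.sInf_empty]
  have hKmeas : Measurable K := by
    apply measurable_to_countable'
    intro n
    cases n with
    | zero =>
      have : K ⁻¹' {0} = Set.Iio (tk 0) ∪ Set.Ici 1 := by
        ext s
        simp only [mem_preimage, mem_singleton_iff, mem_union, mem_Iio, mem_Ici]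
        constructor
        · intro h
          rcases lt_or_ge s 1 with hs | hs
          · left; have := hK_mem s hs; rwa [h] at this
          · right; exact hs
        · rintro (h | h)
          · exact Nat.le_zero.mp (hK_le s 0 h)
          · exact hempty s h
      rw [this]
      exact measurableSet_Iio.union measurableSet_Ici
    | succ n =>
      have : K ⁻¹' {n+1} = Set.Ico (tk n) (tk (n+1)) := by
        ext s
        simp only [mem_preimage, mem_singleton_iff, mem_Ico]
        constructor
        · intro h
          have hs1 : s < 1 := by
            by_contra hc
            push_neg at hc
            have := hempty s hc
            omega
          constructor
          · by_contra hc
            push_neg at hc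
            have := hK_le s n hc
            omega
          · have := hK_mem s hs1; rwa [h] at this
        · rintro ⟨h1, h2⟩
          have hle := hK_le s (n+1) h2
          have hgt := hK_gt s n (h2.trans (htk_lt1 (n+1))) h1
          omega
      rw [this]
      exact measurableSet_Ico
  have hlam_meas : Measurable lam := by
    rw [hlamdef]
    exact (measurable_from_nat (f := fun n : ℕ => (2:ℝ)^n)).comp hKmeas
  -- null set {1}
  have hne1 : ∀ᵐ s : ℝ, s ≠ (1:ℝ) := by
    simp only [ae_iff, not_not]
    simpa using measure_singleton (1:ℝ)
  -- integrability of g on Ioc t 1 for t > 0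
  have hgint : ∀ t : ℝ, 0 < t → Integrable g (volume.restrict (Set.Ioc t 1)) := by
    intro t ht
    refine ⟨hgm.aestronglyMeasurable, HasFiniteIntegral.of_bounded (C := B) ?_⟩
    filter_upwards [ae_restrict_mem measurableSet_Ioc, ae_restrict_of_ae hne1] with s hs hsne
    rw [Real.norm_eq_abs]
    exact hB s ⟨lt_trans ht hs.1, lt_of_le_of_ne hs.2 hsne⟩
  have hgnn : ∀ t : ℝ, 0 < t → 0 ≤ᶠ[ae (volume.restrict (Set.Ioc t 1))] g := by
    intro t ht
    filter_upwards [ae_restrict_mem measurableSet_Ioc, ae_restrict_of_ae hne1] with s hs hsne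
    exact hg0 s ⟨lt_trans ht hs.1, lt_of_le_of_ne hs.2 hsne⟩
  -- bound on lintegral of g over the tails
  have hIg : ∀ m : ℕ, ∫⁻ s in Set.Ioc (tk m) 1, ENNReal.ofReal (g s)
      ≤ ENNReal.ofReal ((1 - tk m) * ((1/2:ℝ)^m * (1/2)^m)) := by
    intro m
    have h0 := htk_mem m
    rw [← ofReal_integral_eq_lintegral_ofReal (hgint _ h0.1) (hgnn _ h0.1)]
    apply ENNReal.ofReal_le_ofReal
    have hA := htk_A m
    have h1t : (0:ℝ) < 1 - tk m := by linarith [h0.2]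
    have heq : ∫ s in Set.Ioc (tk m) 1, g s
        = (1 - tk m) * ((1 / (1 - tk m)) * ∫ s in Set.Ioc (tk m) 1, g s) := by
      field_simp
    rw [heq]
    exact mul_le_mul_of_nonneg_left hA h1t.le
  -- per-interval bound
  have hterm : ∀ m : ℕ, ∫⁻ s in Set.Ico (tk m) (tk (m+1)), ENNReal.ofReal (lam s * g s)
      ≤ ENNReal.ofReal ((2:ℝ)^(m+2)) * ENNReal.ofReal ((1 - tk m) * ((1/2:ℝ)^m * (1/2)^m)) := by
    intro m
    rw [setLIntegral_congr (Ico_ae_eq_Ioc (a := tk m) (b := tk (m+1)))]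
    have h1 : ∫⁻ s in Set.Ioc (tk m) (tk (m+1)), ENNReal.ofReal (lam s * g s)
        ≤ ∫⁻ s in Set.Ioc (tk m) (tk (m+1)),
            ENNReal.ofReal ((2:ℝ)^(m+2)) * ENNReal.ofReal (g s) := by
      apply setLIntegral_mono (measurable_const.mul hgm.ennreal_ofReal)
      intro s hs
      have hs1 : s < 1 := lt_of_le_of_lt hs.2 (htk_lt1 (m+1))
      have hKle : K s ≤ m + 2 :=
        hK_le s (m+2) (lt_of_le_of_lt hs.2 (htk_mono (by omega)))
      have hg : 0 ≤ g s := hg0 s ⟨lt_trans (htk_mem m).1 hs.1, hs1⟩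
      rw [Pi.mul_apply]
      rw [← ENNReal.ofReal_mul (by positivity)]
      apply ENNReal.ofReal_le_ofReal
      rw [hlamdef]
      exact mul_le_mul_of_nonneg_right (pow_le_pow_right₀ one_le_two hKle) hg
    refine h1.trans ?_
    rw [lintegral_const_mul _ hgm.ennreal_ofReal]
    exact mul_le_mul_right
      ((lintegral_mono_set (Set.Ioc_subset_Ioc_right (htk_lt1 (m+1)).le)).trans (hIg m)) _
  -- decomposition of the tail into consecutive intervals
  have hunion : ∀ k : ℕ, Set.Ico (tk k) 1 = ⋃ j : ℕ, Set.Ico (tk (k+j)) (tk (k+j+1)) := by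
    intro k
    ext s
    simp only [mem_Ico, mem_iUnion]
    constructor
    · rintro ⟨h1, h2⟩
      have hKge : k < K s := hK_gt s k h2 h1
      refine ⟨K s - (k+1), ?_, ?_⟩
      · have hidx : k + (K s - (k+1)) = K s - 1 := by omega
        rw [hidx]
        by_contra hc
        push_neg at hc
        have := hK_le s (K s - 1) hc
        omega
      · have hidx : k + (K s - (k+1)) + 1 = K s := by omega
        rw [hidx]
        exact hK_mem s h2
    · rintro ⟨j, h1, h2⟩
      exact ⟨le_trans (htk_mono.monotone (Nat.le_add_right k j)) h1,
        lt_trans h2 (htk_lt1 (k+j+1))⟩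
  have hdisj : ∀ k : ℕ, Pairwise (Function.onFun Disjoint fun j : ℕ => Set.Ico (tk (k+j)) (tk (k+j+1))) := by
    intro k
    have key : ∀ i j : ℕ, i < j →
        Disjoint (Set.Ico (tk (k+i)) (tk (k+i+1))) (Set.Ico (tk (k+j)) (tk (k+j+1))) := by
      intro i j hij
      rw [Set.Ico_disjoint_Ico]
      refine le_trans (min_le_left _ _) (le_trans ?_ (le_max_right _ _))
      exact htk_mono.monotone (by omega)
    intro i j hij
    rcases hij.lt_or_gt with h | h
    · exact key i j h
    · exact (key j i h).symm
  -- main lintegral bound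
  have hmain : ∀ k : ℕ, ∫⁻ s in Set.Ioc (tk k) 1, ENNReal.ofReal (lam s * g s)
      ≤ ENNReal.ofReal (8 * (1/2:ℝ)^k * (1 - tk k)) := by
    intro k
    rw [← setLIntegral_congr (Ico_ae_eq_Ioc (a := tk k) (b := (1:ℝ)))]
    rw [hunion k, lintegral_iUnion (fun j => measurableSet_Ico) (hdisj k)]
    have hbound : ∀ j : ℕ,
        ∫⁻ s in Set.Ico (tk (k+j)) (tk (k+j+1)), ENNReal.ofReal (lam s * g s)
        ≤ ENNReal.ofReal (4 * (1/2:ℝ)^k * (1 - tk k)) * (ENNReal.ofReal (1/2:ℝ))^j := by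
      intro j
      refine (hterm (k+j)).trans ?_
      rw [← ENNReal.ofReal_pow (by norm_num), ← ENNReal.ofReal_mul (by positivity),
        ← ENNReal.ofReal_mul (mul_nonneg (by positivity) (by linarith [htk_lt1 k]))]
      apply ENNReal.ofReal_le_ofReal
      have h1 : 1 - tk (k+j) ≤ 1 - tk k := by
        have := htk_mono.monotone (Nat.le_add_right k j); linarith
      have h21 : (2:ℝ)^(k+j) * (1/2:ℝ)^(k+j) = 1 := by
        rw [← mul_pow]; norm_num
      have hcan : (2:ℝ)^(k+j+2) * ((1/2:ℝ)^(k+j) * (1/2)^(k+j)) = 4 * ((1/2)^k * (1/2)^j) := by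
        rw [pow_add (2:ℝ) (k+j) 2]
        calc (2:ℝ)^(k+j) * 2^2 * ((1/2:ℝ)^(k+j) * (1/2)^(k+j))
            = ((2:ℝ)^(k+j) * (1/2)^(k+j)) * (2^2 * (1/2)^(k+j)) := by ring
          _ = 4 * (1/2:ℝ)^(k+j) := by rw [h21]; ring
          _ = 4 * ((1/2:ℝ)^k * (1/2)^j) := by rw [← pow_add]
      calc (2:ℝ)^(k+j+2) * ((1 - tk (k+j)) * ((1/2:ℝ)^(k+j) * (1/2)^(k+j)))
          = (1 - tk (k+j)) * ((2:ℝ)^(k+j+2) * ((1/2:ℝ)^(k+j) * (1/2)^(k+j))) := by ring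
        _ = (1 - tk (k+j)) * (4 * ((1/2:ℝ)^k * (1/2)^j)) := by rw [hcan]
        _ ≤ (1 - tk k) * (4 * ((1/2:ℝ)^k * (1/2)^j)) :=
            mul_le_mul_of_nonneg_right h1 (by positivity)
        _ = 4 * (1/2:ℝ)^k * (1 - tk k) * (1/2)^j := by ring
    calc ∑' j : ℕ, ∫⁻ s in Set.Ico (tk (k+j)) (tk (k+j+1)), ENNReal.ofReal (lam s * g s)
        ≤ ∑' j : ℕ, ENNReal.ofReal (4 * (1/2:ℝ)^k * (1 - tk k)) * (ENNReal.ofReal (1/2:ℝ))^j :=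
          ENNReal.tsum_le_tsum hbound
      _ = ENNReal.ofReal (4 * (1/2:ℝ)^k * (1 - tk k)) * ∑' j : ℕ, (ENNReal.ofReal (1/2:ℝ))^j :=
          ENNReal.tsum_mul_left
      _ = ENNReal.ofReal (4 * (1/2:ℝ)^k * (1 - tk k)) * (1 - ENNReal.ofReal (1/2:ℝ))⁻¹ := by
          rw [ENNReal.tsum_geometric]
      _ = ENNReal.ofReal (8 * (1/2:ℝ)^k * (1 - tk k)) := by
          have hc : (0:ℝ) ≤ 4 * (1/2:ℝ)^k * (1 - tk k) :=
            mul_nonneg (by positivity) (by linarith [htk_lt1 k])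
          have h12 : ENNReal.ofReal (1/2:ℝ) = 2⁻¹ := by
            rw [one_div, ENNReal.ofReal_inv_of_pos (by norm_num)]
            norm_num
          have e1 : ((1:ENNReal) - ENNReal.ofReal (1/2:ℝ))⁻¹ = ENNReal.ofReal 2 := by
            rw [h12, ENNReal.one_sub_inv_two, inv_inv, ENNReal.ofReal_ofNat]
          rw [e1, ← ENNReal.ofReal_mul hc]
          congr 1
          ring
  -- identify the Bochner integral with the lintegral
  have hIeq : ∀ k : ℕ, ∫ s in Set.Ioc (tk k) 1, lam s * g s
      = (∫⁻ s in Set.Ioc (tk k) 1, ENNReal.ofReal (lam s * g s)).toReal := by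
    intro k
    apply integral_eq_lintegral_of_nonneg_ae
    · filter_upwards [ae_restrict_mem measurableSet_Ioc, ae_restrict_of_ae hne1] with s hs hsne
      have hg : 0 ≤ g s := hg0 s ⟨lt_trans (htk_mem k).1 hs.1, lt_of_le_of_ne hs.2 hsne⟩
      have hl : 0 ≤ lam s := by rw [hlamdef]; positivity
      exact mul_nonneg hl hg
    · exact (hlam_meas.mul hgm).aestronglyMeasurable
  -- final bounds and squeeze
  have hfin : ∀ k : ℕ, (1 / (1 - tk k)) * ∫ s in Set.Ioc (tk k) 1, lam s * g s
      ≤ 8 * (1/2:ℝ)^k := by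
    intro k
    have h1t : (0:ℝ) < 1 - tk k := by linarith [(htk_mem k).2]
    have hle : ∫ s in Set.Ioc (tk k) 1, lam s * g s ≤ 8 * (1/2:ℝ)^k * (1 - tk k) := by
      rw [hIeq k]
      have h2 := ENNReal.toReal_mono ENNReal.ofReal_ne_top (hmain k)
      refine h2.trans ?_
      rw [ENNReal.toReal_ofReal (mul_nonneg (by positivity) (by linarith [htk_lt1 k]))]
    calc (1 / (1 - tk k)) * ∫ s in Set.Ioc (tk k) 1, lam s * g s
        ≤ (1 / (1 - tk k)) * (8 * (1/2:ℝ)^k * (1 - tk k)) :=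
          mul_le_mul_of_nonneg_left hle (by positivity)
      _ = 8 * (1/2:ℝ)^k := by field_simp
  have hnn : ∀ k : ℕ, 0 ≤ (1 / (1 - tk k)) * ∫ s in Set.Ioc (tk k) 1, lam s * g s := by
    intro k
    have h1t : (0:ℝ) < 1 - tk k := by linarith [(htk_mem k).2]
    apply mul_nonneg (by positivity)
    rw [hIeq k]
    exact ENNReal.toReal_nonneg
  refine ⟨lam, hlam_pos, hlam_mono, hlam_tend, tk, htk_mono, htk_mem, htk_tend, ?_⟩
  have h8 : Tendsto (fun k : ℕ => 8 * (1/2:ℝ)^k) atTop (𝓝 0) := by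
    have := tendsto_pow_atTop_nhds_zero_of_lt_one (by norm_num : (0:ℝ) ≤ 1/2)
      (by norm_num : (1/2:ℝ) < 1)
    simpa using this.const_mul 8
  exact tendsto_of_tendsto_of_tendsto_of_le_of_le tendsto_const_nhds h8 hnn hfin
end

section
/- Let g, h : (0,∞) → ℝ be bounded measurable functions with g ≥ 0, such that (1/t) ∫_0^t g(s) ds → 0 and (1/t) ∫_0^t h(s) ds → 0 as t → ∞. Then there exists a positive increasing function λ on (0,∞) with λ(t) → ∞, and a sequence t̃_k → ∞, such that limsup_{k→∞} sup_{τ ∈ (0, t̃_k/4)} (1/τ) ∫_{t̃_k}^{t̃_k+τ} (λ(s) g(s) + h(s)) ds ≤ 0. -/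
open MeasureTheory Set Filter Topology

lemma my_integrableOn_Ioc_of_bound (f : ℝ → ℝ) (a b C : ℝ) (hm : Measurable f)
    (hC : ∀ x ∈ Set.Ioc a b, |f x| ≤ C) : IntegrableOn f (Set.Ioc a b) := by
  apply Measure.integrableOn_of_bounded (M := C)
  · simp [Real.volume_Ioc]
  · exact hm.aestronglyMeasurable
  · filter_upwards [ae_restrict_mem measurableSet_Ioc] with x hx
    simpa [Real.norm_eq_abs] using hC x hx

noncomputable def auxS (θ : ℕ → ℝ) (c : ℝ) : ℕ → ℝ
  | 0 => max (θ 0) 1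
  | n+1 => max (θ (n+1)) (max (auxS θ c n + 1) (2^(2*(n+1)) * c * auxS θ c n))

/-- the real analysis lemma (global case). -/
theorem stmt2 (g h : ℝ → ℝ)
    (hgm : Measurable g) (hhm : Measurable h)
    (hgb : ∃ B, ∀ t > (0:ℝ), |g t| ≤ B)
    (hhb : ∃ B, ∀ t > (0:ℝ), |h t| ≤ B)
    (hg0 : ∀ t > (0:ℝ), 0 ≤ g t)
    (hgavg : Tendsto (fun t => (1 / t) * ∫ s in Set.Ioc (0:ℝ) t, g s) atTop (nhds 0))
    (hhavg : Tendsto (fun t => (1 / t) * ∫ s in Set.Ioc (0:ℝ) t, h s) atTop (nhds 0)) :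
    ∃ lam : ℝ → ℝ, (∀ t > (0:ℝ), 0 < lam t) ∧
      MonotoneOn lam (Set.Ioi (0:ℝ)) ∧
      Tendsto lam atTop atTop ∧
      ∃ tt : ℕ → ℝ, (∀ k, 0 < tt k) ∧ Tendsto tt atTop atTop ∧
        ∀ ε > (0:ℝ), ∀ᶠ k in atTop, ∀ τ ∈ Set.Ioo (0:ℝ) (tt k / 4),
          (1 / τ) * ∫ s in Set.Ioc (tt k) (tt k + τ), (lam s * g s + h s) ≤ ε := by
  classical
  obtain ⟨Bg, hBg⟩ := hgb
  obtain ⟨Bh, hBh⟩ := hhb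
  have hBg0 : 0 ≤ Bg := le_trans (abs_nonneg _) (hBg 1 one_pos)
  have hBh0 : 0 ≤ Bh := le_trans (abs_nonneg _) (hBh 1 one_pos)
  -- thresholds for the averages of g
  have hθex : ∀ n : ℕ, ∃ θ : ℝ, ∀ t, θ ≤ t →
      (∫ s in Set.Ioc (0:ℝ) t, g s) ≤ (1/4)^n * t := by
    intro n
    have h1 : ∀ᶠ t in atTop, (1 / t) * ∫ s in Set.Ioc (0:ℝ) t, g s < (1/4)^n :=
      hgavg.eventually_lt_const (by positivity)
    obtain ⟨θ, hθ⟩ := eventually_atTop.mp (h1.and (eventually_ge_atTop (1:ℝ)))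
    refine ⟨θ, fun t ht => ?_⟩
    obtain ⟨hlt, ht1⟩ := hθ t ht
    have ht0 : (0:ℝ) < t := lt_of_lt_of_le one_pos ht1
    calc (∫ s in Set.Ioc (0:ℝ) t, g s)
        = t * ((1/t) * ∫ s in Set.Ioc (0:ℝ) t, g s) := by
          rw [one_div, ← mul_assoc, mul_inv_cancel₀ ht0.ne', one_mul]
      _ ≤ t * (1/4)^n := mul_le_mul_of_nonneg_left hlt.le ht0.le
      _ = (1/4)^n * t := mul_comm _ _
  choose θ hθ using hθex
  set S : ℕ → ℝ := auxS θ (Bg + 1) with hSdef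
  have hSsucc : ∀ n, S (n+1) = max (θ (n+1)) (max (S n + 1) (2^(2*(n+1)) * (Bg+1) * S n)) :=
    fun n => rfl
  have hS0 : (1:ℝ) ≤ S 0 := le_max_right _ _
  have hSstep : ∀ n, S n + 1 ≤ S (n+1) := fun n => by
    rw [hSsucc]; exact le_trans (le_max_left _ _) (le_max_right _ _)
  have hS1 : ∀ n, 1 ≤ S n := by
    intro n
    induction n with
    | zero => exact hS0
    | succ n ih => have := hSstep n; linarith
  have hSmono : StrictMono S := strictMono_nat_of_lt_succ (fun n => by have := hSstep n; linarith)
  have hSθ : ∀ n, θ n ≤ S n := by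
    intro n
    cases n with
    | zero => exact le_max_left _ _
    | succ n => rw [hSsucc]; exact le_max_left _ _
  have hSgrow : ∀ n, 2^(2*(n+1)) * (Bg+1) * S n ≤ S (n+1) := fun n => by
    rw [hSsucc]; exact le_trans (le_max_right _ _) (le_max_right _ _)
  have hSa : ∀ n t, S n ≤ t → (∫ s in Set.Ioc (0:ℝ) t, g s) ≤ (1/4)^n * t :=
    fun n t ht => hθ n t ((hSθ n).trans ht)
  have hSge : ∀ n : ℕ, (n:ℝ) + 1 ≤ S n := by
    intro n
    induction n with
    | zero => simpa using hS0
    | succ n ih => have := hSstep n; push_cast; push_cast at ih; linarith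
  have hex : ∀ t : ℝ, ∃ n, t ≤ S n := by
    intro t
    obtain ⟨n, hn⟩ := exists_nat_ge t
    exact ⟨n, hn.trans (by linarith [hSge n])⟩
  -- the weight lam
  set idx : ℝ → ℕ := fun t => Nat.find (hex t) with hidxdef
  have hidx_spec : ∀ t, t ≤ S (idx t) := fun t => Nat.find_spec (hex t)
  have hidx_le : ∀ t n, t ≤ S n → idx t ≤ n := fun t n hle => Nat.find_min' (hex t) hle
  set lam : ℝ → ℝ := fun t => 2 ^ (idx t) with hlamdef
  have hlam_pos : ∀ t, 0 < lam t := fun t => by positivity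
  have hlam_mono : Monotone lam := by
    intro s t hst
    have : idx s ≤ idx t := hidx_le s _ (hst.trans (hidx_spec t))
    exact pow_le_pow_right₀ one_le_two this
  have hlam_le : ∀ (n : ℕ) t, t ≤ S n → lam t ≤ 2^n :=
    fun n t hle => pow_le_pow_right₀ one_le_two (hidx_le t n hle)
  have hlam_meas : Measurable lam := hlam_mono.measurable
  have hlam_ge : ∀ (n : ℕ) t, S n < t → (2:ℝ)^(n+1) ≤ lam t := by
    intro n t hlt
    have hn : n + 1 ≤ idx t := by
      by_contra hc
      push_neg at hc
      exact absurd ((hidx_spec t).trans (hSmono.monotone (Nat.lt_succ_iff.mp hc)))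
        (not_le.mpr hlt)
    exact pow_le_pow_right₀ one_le_two hn
  -- integrability
  have hgInt : ∀ a b : ℝ, 0 ≤ a → IntegrableOn g (Set.Ioc a b) := by
    intro a b ha
    exact my_integrableOn_Ioc_of_bound g a b Bg hgm (fun x hx => hBg x (lt_of_le_of_lt ha hx.1))
  have hhInt : ∀ a b : ℝ, 0 ≤ a → IntegrableOn h (Set.Ioc a b) := by
    intro a b ha
    exact my_integrableOn_Ioc_of_bound h a b Bh hhm (fun x hx => hBh x (lt_of_le_of_lt ha hx.1))
  have hlgInt : ∀ a b : ℝ, 0 ≤ a → IntegrableOn (fun s => lam s * g s) (Set.Ioc a b) := by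
    intro a b ha
    refine my_integrableOn_Ioc_of_bound _ a b (lam b * Bg) (hlam_meas.mul hgm) (fun x hx => ?_)
    have hx0 : 0 < x := lt_of_le_of_lt ha hx.1
    rw [abs_mul, abs_of_pos (hlam_pos x)]
    exact mul_le_mul (hlam_mono hx.2) (hBg x hx0) (abs_nonneg _) (hlam_pos b).le
  have hconst : ∀ (a b C : ℝ), a ≤ b → (∫ _ in Set.Ioc a b, C) = C * (b - a) := by
    intro a b C hab
    rw [setIntegral_const, Real.volume_real_Ioc_of_le hab,
      smul_eq_mul, mul_comm]
  -- key estimate on the average of lam * g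
  have claimC : ∀ (m : ℕ) (t : ℝ), S (m+1) < t → t ≤ S (m+2) →
      (∫ s in Set.Ioc (0:ℝ) t, lam s * g s) ≤ 16 * (1/2)^(m+1) * t := by
    intro m t h1 h2
    have hSm1 : (1:ℝ) ≤ S m := hS1 m
    have hSmt : S m ≤ t := le_of_lt (lt_of_lt_of_le (hSmono (Nat.lt_succ_self m)) h1.le)
    have ht0 : 0 < t := lt_of_lt_of_le one_pos (le_trans (hS1 (m+1)) h1.le)
    have hsplit : (∫ s in Set.Ioc (0:ℝ) t, lam s * g s)
        = (∫ s in Set.Ioc (0:ℝ) (S m), lam s * g s) + (∫ s in Set.Ioc (S m) t, lam s * g s) := by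
      rw [← setIntegral_union (Set.Ioc_disjoint_Ioc_of_le le_rfl) measurableSet_Ioc
        (hlgInt 0 (S m) le_rfl) (hlgInt (S m) t (by linarith)),
        Set.Ioc_union_Ioc_eq_Ioc (by linarith) hSmt]
    have p1 : (∫ s in Set.Ioc (0:ℝ) (S m), lam s * g s) ≤ 2^m * Bg * S m := by
      calc (∫ s in Set.Ioc (0:ℝ) (S m), lam s * g s)
          ≤ ∫ _ in Set.Ioc (0:ℝ) (S m), ((2:ℝ)^m * Bg) := by
            refine setIntegral_mono_on (hlgInt 0 (S m) le_rfl)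
              (integrableOn_const (by rw [Real.volume_Ioc]; exact ENNReal.ofReal_ne_top))
              measurableSet_Ioc (fun x hx => ?_)
            have hx0 : 0 < x := hx.1
            exact mul_le_mul (hlam_le m x hx.2) (le_trans (le_abs_self _) (hBg x hx0))
              (hg0 x hx0) (by positivity)
        _ = 2^m * Bg * S m := by rw [hconst _ _ _ (by linarith)]; ring
    have e1 : ((1:ℝ)/2)^(m+1) * 2^(m+1) = 1 := by
      rw [← mul_pow]; norm_num
    have e2 : (2:ℝ)^(2*(m+1)) = 2^(m+1) * 2^(m+1) := by rw [two_mul, pow_add]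
    have p1t : (2:ℝ)^m * Bg * S m ≤ (1/2)^(m+1) * t := by
      calc (2:ℝ)^m * Bg * S m
          ≤ 2^(m+1) * (Bg+1) * S m := by
            have hpow : (2:ℝ)^m ≤ 2^(m+1) := pow_le_pow_right₀ one_le_two (Nat.le_succ m)
            have hmm : (2:ℝ)^m * Bg ≤ 2^(m+1) * (Bg+1) :=
              mul_le_mul hpow (by linarith) hBg0 (by positivity)
            exact mul_le_mul_of_nonneg_right hmm (by linarith)
        _ = (1/2)^(m+1) * (2^(2*(m+1)) * (Bg+1) * S m) := by
            rw [e2]; linear_combination (-(2:ℝ)^(m+1) * (Bg+1) * S m) * e1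
        _ ≤ (1/2)^(m+1) * S (m+1) := by
            exact mul_le_mul_of_nonneg_left (hSgrow m) (by positivity)
        _ ≤ (1/2)^(m+1) * t := mul_le_mul_of_nonneg_left h1.le (by positivity)
    have hgae : 0 ≤ᵐ[volume.restrict (Set.Ioc (0:ℝ) t)] g := by
      filter_upwards [ae_restrict_mem measurableSet_Ioc] with x hx using hg0 x hx.1
    have p2 : (∫ s in Set.Ioc (S m) t, lam s * g s) ≤ 2^(m+2) * ((1/4)^m * t) := by
      calc (∫ s in Set.Ioc (S m) t, lam s * g s)
          ≤ ∫ s in Set.Ioc (S m) t, (2:ℝ)^(m+2) * g s := by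
            refine setIntegral_mono_on (hlgInt _ _ (by linarith))
              ((hgInt _ _ (by linarith)).const_mul _) measurableSet_Ioc (fun x hx => ?_)
            have hx0 : 0 < x := lt_of_le_of_lt (by linarith : (0:ℝ) ≤ S m) hx.1
            exact mul_le_mul_of_nonneg_right (hlam_le (m+2) x (hx.2.trans h2)) (hg0 x hx0)
        _ = 2^(m+2) * ∫ s in Set.Ioc (S m) t, g s := integral_const_mul _ _
        _ ≤ 2^(m+2) * ((1/4)^m * t) := by
            refine mul_le_mul_of_nonneg_left ?_ (by positivity)
            calc (∫ s in Set.Ioc (S m) t, g s)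
                ≤ ∫ s in Set.Ioc (0:ℝ) t, g s :=
                  setIntegral_mono_set (hgInt 0 t le_rfl) hgae
                    (HasSubset.Subset.eventuallyLE (Set.Ioc_subset_Ioc_left (by linarith)))
              _ ≤ (1/4)^m * t := hSa m t hSmt
    have e4 : (2:ℝ)^(m+2) * (1/4)^m = 8 * (1/2)^(m+1) := by
      have h2m : ((1:ℝ)/2)^m * 2^m = 1 := by rw [← mul_pow]; norm_num
      have h4m : ((1:ℝ)/4)^m = (1/2)^m * (1/2)^m := by rw [← mul_pow]; norm_num
      have hp2 : (2:ℝ)^(m+2) = 4 * 2^m := by rw [pow_add]; ring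
      have hp1 : ((1:ℝ)/2)^(m+1) = (1/2)^m * (1/2) := pow_succ _ _
      rw [hp2, h4m, hp1]
      linear_combination (4 * ((1:ℝ)/2)^m) * h2m
    have hx0 : (0:ℝ) ≤ (1/2)^(m+1) * t := by positivity
    have p2' : (∫ s in Set.Ioc (S m) t, lam s * g s) ≤ 8 * ((1/2)^(m+1) * t) := by
      calc (∫ s in Set.Ioc (S m) t, lam s * g s) ≤ 2^(m+2) * ((1/4)^m * t) := p2
        _ = 8 * ((1/2)^(m+1) * t) := by rw [← mul_assoc, e4, mul_assoc]
    rw [hsplit]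
    have := p1.trans p1t
    nlinarith
  have claimD : ∀ (m : ℕ) (t : ℝ), S (m+1) < t →
      (∫ s in Set.Ioc (0:ℝ) t, lam s * g s) ≤ 16 * (1/2)^(m+1) * t := by
    intro m t hmt
    have ht0 : 0 < t := lt_of_lt_of_le one_pos (le_trans (hS1 (m+1)) hmt.le)
    obtain ⟨N, hN⟩ := hex t
    have aux : ∀ N : ℕ, t ≤ S N → (∫ s in Set.Ioc (0:ℝ) t, lam s * g s) ≤ 16 * (1/2)^(m+1) * t := by
      intro N
      induction N with
      | zero =>
        intro hz
        have := hSmono.monotone (Nat.zero_le (m+1))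
        linarith
      | succ n ih =>
        intro hz
        by_cases hc : t ≤ S n
        · exact ih hc
        · push_neg at hc
          have hmn : m + 1 ≤ n := by
            have h1 : S (m+1) < S (n+1) := lt_of_lt_of_le hmt hz
            have := hSmono.lt_iff_lt.mp h1
            omega
          obtain ⟨p, rfl⟩ : ∃ p, n = p + 1 := ⟨n - 1, by omega⟩
          have hCC := claimC p t hc hz
          calc (∫ s in Set.Ioc (0:ℝ) t, lam s * g s) ≤ 16 * (1/2)^(p+1) * t := hCC
            _ ≤ 16 * (1/2)^(m+1) * t := by
                have hple : ((1:ℝ)/2)^(p+1) ≤ (1/2)^(m+1) :=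
                  pow_le_pow_of_le_one (by norm_num) (by norm_num) (by omega)
                nlinarith
    exact aux N hN
  -- the average of lam * g tends to 0
  have hlgavg : Tendsto (fun t => (1/t) * ∫ s in Set.Ioc (0:ℝ) t, lam s * g s) atTop (nhds 0) := by
    rw [NormedAddCommGroup.tendsto_nhds_zero]
    intro ε hε
    obtain ⟨m, hm⟩ : ∃ m : ℕ, 16 * ((1:ℝ)/2)^(m+1) < ε := by
      obtain ⟨m, hm⟩ := exists_pow_lt_of_lt_one (show (0:ℝ) < ε/16 by linarith)
        (by norm_num : (1:ℝ)/2 < 1)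
      refine ⟨m, ?_⟩
      have : ((1:ℝ)/2)^(m+1) ≤ (1/2)^m := pow_le_pow_of_le_one (by norm_num) (by norm_num) (Nat.le_succ m)
      linarith
    filter_upwards [eventually_gt_atTop (S (m+1))] with t ht
    have ht0 : 0 < t := lt_of_le_of_lt (by linarith [hS1 (m+1)] : (0:ℝ) ≤ S (m+1)) ht
    have hnn : 0 ≤ (1/t) * ∫ s in Set.Ioc (0:ℝ) t, lam s * g s := by
      refine mul_nonneg (by positivity) (setIntegral_nonneg measurableSet_Ioc (fun x hx => ?_))
      exact mul_nonneg (hlam_pos x).le (hg0 x hx.1)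
    rw [Real.norm_eq_abs, abs_of_nonneg hnn]
    have hD := claimD m t ht
    calc (1/t) * ∫ s in Set.Ioc (0:ℝ) t, lam s * g s
        ≤ (1/t) * (16 * (1/2)^(m+1) * t) := mul_le_mul_of_nonneg_left hD (by positivity)
      _ = 16 * (1/2)^(m+1) := by field_simp
      _ < ε := hm
  -- the primitive F
  set f : ℝ → ℝ := fun s => if 0 < s then lam s * g s + h s else 0 with hfdef
  have hfmeas : Measurable f :=
    Measurable.ite measurableSet_Ioi ((hlam_meas.mul hgm).add hhm) measurable_const
  have hfInt : ∀ a b : ℝ, IntervalIntegrable f volume a b := by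
    intro a b
    rw [intervalIntegrable_iff]
    have : Set.uIoc a b = Set.Ioc (min a b) (max a b) := rfl
    rw [this]
    refine my_integrableOn_Ioc_of_bound _ _ _ (lam (max a b) * Bg + Bh) hfmeas (fun x hx => ?_)
    by_cases hx0 : 0 < x
    · rw [hfdef]; simp only [if_pos hx0]
      calc |lam x * g x + h x| ≤ |lam x * g x| + |h x| := abs_add_le _ _
        _ ≤ lam (max a b) * Bg + Bh := by
            refine add_le_add ?_ (hBh x hx0)
            rw [abs_mul, abs_of_pos (hlam_pos x)]
            exact mul_le_mul (hlam_mono hx.2) (hBg x hx0) (abs_nonneg _) (hlam_pos _).le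
    · rw [hfdef]; simp only [if_neg hx0, abs_zero]
      have := (hlam_pos (max a b)).le
      positivity
  set F : ℝ → ℝ := fun t => ∫ s in (0:ℝ)..t, f s with hFdef
  have hFcont : Continuous F := intervalIntegral.continuous_primitive hfInt 0
  have hFIoc : ∀ t : ℝ, 0 ≤ t → F t = ∫ s in Set.Ioc (0:ℝ) t, f s := fun t ht =>
    intervalIntegral.integral_of_le ht
  have hFdiff : ∀ t τ : ℝ, 1 ≤ t → 0 < τ →
      (∫ s in Set.Ioc t (t+τ), (lam s * g s + h s)) = F (t+τ) - F t := by
    intro t τ ht hτ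
    have h1 : (∫ s in Set.Ioc t (t+τ), (lam s * g s + h s)) = ∫ s in Set.Ioc t (t+τ), f s := by
      refine (setIntegral_congr_fun measurableSet_Ioc (fun x hx => ?_)).symm
      have hx0 : 0 < x := lt_of_le_of_lt (by linarith : (0:ℝ) ≤ t) hx.1
      rw [hfdef]; exact if_pos hx0
    rw [h1, ← intervalIntegral.integral_of_le (by linarith : t ≤ t + τ)]
    have h2 := intervalIntegral.integral_add_adjacent_intervals (hfInt 0 t) (hfInt t (t+τ))
    rw [hFdef]
    simp only
    linarith [h2]
  have hfavg : Tendsto (fun t => (1/t) * F t) atTop (nhds 0) := by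
    have heq : (fun t => (1/t) * (∫ s in Set.Ioc (0:ℝ) t, lam s * g s)
        + (1/t) * (∫ s in Set.Ioc (0:ℝ) t, h s)) =ᶠ[atTop] (fun t => (1/t) * F t) := by
      filter_upwards [eventually_ge_atTop (0:ℝ)] with t ht
      rw [hFIoc t ht]
      have hsum : (∫ s in Set.Ioc (0:ℝ) t, f s)
          = (∫ s in Set.Ioc (0:ℝ) t, lam s * g s) + ∫ s in Set.Ioc (0:ℝ) t, h s := by
        rw [← integral_add (hlgInt 0 t le_rfl) (hhInt 0 t le_rfl)]
        refine setIntegral_congr_fun measurableSet_Ioc (fun x hx => ?_)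
        rw [hfdef]; exact if_pos hx.1
      rw [hsum]; ring
    simpa using (hlgavg.add hhavg).congr' heq
  -- good times
  have keylemma : ∀ ε : ℝ, 0 < ε → ∀ R : ℝ, ∃ t, R ≤ t ∧ 1 ≤ t ∧
      ∀ τ, 0 < τ → (∫ s in Set.Ioc t (t+τ), (lam s * g s + h s)) ≤ ε * τ := by
    intro ε hε R
    have h1 : ∀ᶠ t in atTop, |(1/t) * F t| < ε/2 := by
      filter_upwards [NormedAddCommGroup.tendsto_nhds_zero.mp hfavg (ε/2) (by linarith)] with t ht
      rwa [Real.norm_eq_abs] at ht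
    obtain ⟨T₀, hT₀⟩ := eventually_atTop.mp h1
    set T := max T₀ (max R 1) with hTdef
    have hT1 : (1:ℝ) ≤ T := le_trans (le_max_right _ _) (le_max_right _ _)
    have hTR : R ≤ T := le_trans (le_max_left _ _) (le_max_right _ _)
    have hFb : ∀ t, T ≤ t → F t ≤ (ε/2) * t := by
      intro t ht
      have ht0 : 0 < t := lt_of_lt_of_le one_pos (hT1.trans ht)
      have h2 : (1/t) * F t ≤ ε/2 :=
        le_of_lt (lt_of_le_of_lt (le_abs_self _) (hT₀ t (le_trans (le_max_left _ _) ht)))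
      calc F t = t * ((1/t) * F t) := by
            rw [one_div, ← mul_assoc, mul_inv_cancel₀ ht0.ne', one_mul]
        _ ≤ t * (ε/2) := mul_le_mul_of_nonneg_left h2 ht0.le
        _ = (ε/2) * t := mul_comm _ _
    set G : ℝ → ℝ := fun t => F t - ε * t with hGdef
    have hGcont : Continuous G := hFcont.sub (continuous_const.mul continuous_id)
    set T' := max T ((2/ε) * (|G T| + 1)) with hT'def
    have hTT' : T ≤ T' := le_max_left _ _
    obtain ⟨t₀, ht₀mem, ht₀max⟩ :=
      isCompact_Icc.exists_isMaxOn (Set.nonempty_Icc.mpr hTT') hGcont.continuousOn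
    have ht₀T : T ≤ t₀ := ht₀mem.1
    have hmax : ∀ s, T ≤ s → G s ≤ G t₀ := by
      intro s hs
      by_cases hsT' : s ≤ T'
      · exact ht₀max (Set.mem_Icc.mpr ⟨hs, hsT'⟩)
      · push_neg at hsT'
        have h3 : F s ≤ (ε/2) * s := hFb s hs
        have h4 : G s ≤ -(ε/2) * s := by rw [hGdef]; simp only; linarith
        have h5 : (2/ε) * (|G T| + 1) ≤ T' := le_max_right _ _
        have hT'0 : 0 < T' := lt_of_lt_of_le (lt_of_lt_of_le one_pos hT1) hTT'
        have h6 : -(ε/2) * s < -(ε/2) * T' := by nlinarith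
        have h7 : -(ε/2) * T' ≤ -(|G T| + 1) := by
          have hh := mul_le_mul_of_nonneg_left h5 (le_of_lt (half_pos hε))
          have he : (ε/2) * ((2/ε) * (|G T| + 1)) = |G T| + 1 := by
            field_simp
          linarith
        have h8 : G T ≤ G t₀ := ht₀max (Set.mem_Icc.mpr ⟨le_rfl, hTT'⟩)
        have h9 : -|G T| ≤ G T := neg_abs_le _
        clear_value T' G
        linarith
    refine ⟨t₀, hTR.trans ht₀T, hT1.trans ht₀T, fun τ hτ => ?_⟩
    have hdiff := hFdiff t₀ τ (hT1.trans ht₀T) hτ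
    have hm := hmax (t₀ + τ) (by linarith)
    rw [hGdef] at hm
    simp only at hm
    rw [hdiff]
    linarith
  have hkey : ∀ k : ℕ, ∃ t : ℝ, ((k:ℝ)+1) ≤ t ∧ 1 ≤ t ∧
      ∀ τ, 0 < τ → (∫ s in Set.Ioc t (t+τ), (lam s * g s + h s)) ≤ (1/((k:ℝ)+1)) * τ := by
    intro k
    exact keylemma (1/((k:ℝ)+1)) (by positivity) ((k:ℝ)+1)
  choose tt htt1 htt2 htt3 using hkey
  refine ⟨lam, fun t _ => hlam_pos t, hlam_mono.monotoneOn _, ?_, tt,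
    fun k => lt_of_lt_of_le one_pos (htt2 k), ?_, ?_⟩
  · rw [tendsto_atTop]
    intro b
    obtain ⟨n, hn⟩ := exists_nat_ge b
    filter_upwards [eventually_gt_atTop (S n)] with t ht
    have h1 := hlam_ge n t ht
    have h2n : (n:ℝ) ≤ 2^(n+1) := by
      have hlt := Nat.lt_two_pow_self (n := n)
      calc (n:ℝ) ≤ 2^n := by exact_mod_cast hlt.le
        _ ≤ 2^(n+1) := pow_le_pow_right₀ one_le_two (Nat.le_succ n)
    linarith
  · refine tendsto_atTop_mono (fun k => ?_) tendsto_natCast_atTop_atTop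
    have := htt1 k
    linarith
  · intro ε hε
    obtain ⟨K, hK⟩ := exists_nat_gt (1/ε)
    filter_upwards [eventually_ge_atTop K] with k hk
    intro τ hτ
    have hτ0 : 0 < τ := hτ.1
    have hint := htt3 k τ hτ0
    have hkε : 1/((k:ℝ)+1) ≤ ε := by
      rw [div_le_iff₀ (by positivity)]
      have hKk : (K:ℝ) ≤ (k:ℝ) := by exact_mod_cast hk
      have h1 : (1:ℝ)/ε < (k:ℝ)+1 := lt_of_lt_of_le hK (by linarith)
      have h2 := (div_lt_iff₀ hε).mp h1
      linarith
    calc (1/τ) * ∫ s in Set.Ioc (tt k) (tt k + τ), (lam s * g s + h s)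
        ≤ (1/τ) * ((1/((k:ℝ)+1)) * τ) := mul_le_mul_of_nonneg_left hint (by positivity)
      _ = 1/((k:ℝ)+1) := by field_simp
      _ ≤ ε := hkε
end

section
/- Let g : (0,∞) → ℝ be a bounded nonnegative measurable function, not identically zero on any interval (T,∞), with (1/t) ∫_0^t g(s) ds → 0 as t → ∞. Then there exists a positive increasing function λ : (0,∞) → ℝ with λ(t) → ∞ and a sequence t_k → ∞ with t_{k+1} > 2 t_k such that (1/t_k) ∫_0^{t_k} λ(s) g(s) ds → 0 as k → ∞. -/
open MeasureTheory Set Filter Topology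

/-- boosting the weight for the kinetic energy average (global case). -/
theorem stmt3 (g : ℝ → ℝ) (hgm : Measurable g)
    (hgb : ∃ B, ∀ t > (0:ℝ), |g t| ≤ B)
    (hg0 : ∀ t > (0:ℝ), 0 ≤ g t)
    (hnz : ∀ T > (0:ℝ), ∃ s > T, g s ≠ 0)
    (havg : Tendsto (fun t => (1 / t) * ∫ s in Set.Ioc (0:ℝ) t, g s) atTop (nhds 0)) :
    ∃ lam : ℝ → ℝ, (∀ t > (0:ℝ), 0 < lam t) ∧
      MonotoneOn lam (Set.Ioi (0:ℝ)) ∧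
      Tendsto lam atTop atTop ∧
      ∃ tk : ℕ → ℝ, (∀ k, 0 < tk k) ∧ (∀ k, 2 * tk k < tk (k + 1)) ∧
        Tendsto tk atTop atTop ∧
        Tendsto (fun k => (1 / tk k) * ∫ s in Set.Ioc (0:ℝ) (tk k), lam s * g s)
          atTop (nhds 0) := by
  classical
  obtain ⟨B, hB⟩ := hgb
  -- Step 1: thresholds where the Cesàro average is small
  have hT : ∀ k : ℕ, ∃ T : ℝ, 1 ≤ T ∧
      ∀ u ≥ T, ∫ s in Set.Ioc (0:ℝ) u, g s ≤ (4:ℝ)⁻¹ ^ k * u := by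
    intro k
    have hpos : (0:ℝ) < 4⁻¹ ^ k := by positivity
    have h := (havg.eventually_lt_const hpos)
    rw [eventually_atTop] at h
    obtain ⟨T, hTh⟩ := h
    refine ⟨max T 1, le_max_right _ _, fun u hu => ?_⟩
    have hu1 : (1:ℝ) ≤ u := le_trans (le_max_right _ _) hu
    have hupos : 0 < u := lt_of_lt_of_le one_pos hu1
    have h1 := hTh u (le_trans (le_max_left _ _) hu)
    have h2 : u * ((1 / u) * ∫ s in Set.Ioc (0:ℝ) u, g s) < u * ((4:ℝ)⁻¹ ^ k) :=
      mul_lt_mul_of_pos_left h1 hupos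
    rw [← mul_assoc, mul_one_div_cancel hupos.ne', one_mul] at h2
    linarith [h2]
  choose T hT1 hTle using hT
  -- Step 2: the sequence t k
  set t : ℕ → ℝ := fun k => Nat.rec (T 0) (fun k tk => max (T (k + 1)) (2 * tk + 1)) k
    with ht_def
  have ht0 : t 0 = T 0 := rfl
  have htsucc : ∀ k, t (k + 1) = max (T (k + 1)) (2 * t k + 1) := fun k => rfl
  have ht1 : ∀ k, 1 ≤ t k := by
    intro k
    induction k with
    | zero => simpa [ht0] using hT1 0
    | succ n ih =>
      rw [htsucc]
      have : (1:ℝ) ≤ 2 * t n + 1 := by linarith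
      exact le_trans this (le_max_right _ _)
  have htpos : ∀ k, 0 < t k := fun k => lt_of_lt_of_le one_pos (ht1 k)
  have hgrow : ∀ k, 2 * t k < t (k + 1) := by
    intro k
    rw [htsucc]
    have : 2 * t k < 2 * t k + 1 := by linarith
    exact lt_of_lt_of_le this (le_max_right _ _)
  have htmono : StrictMono t := strictMono_nat_of_lt_succ (by
    intro n
    have := hgrow n
    have := htpos n
    linarith)
  have hTk : ∀ k, T k ≤ t k := by
    intro k
    cases k with
    | zero => simp [ht0]
    | succ n => rw [htsucc]; exact le_max_left _ _
  have havgk : ∀ k, ∫ s in Set.Ioc (0:ℝ) (t k), g s ≤ (4:ℝ)⁻¹ ^ k * t k :=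
    fun k => hTle k (t k) (hTk k)
  have hdouble : ∀ k d : ℕ, 2 ^ d * t k ≤ t (k + d) := by
    intro k d
    induction d with
    | zero => simp
    | succ n ih =>
      have h1 : (2:ℝ) ^ (n + 1) * t k = 2 * (2 ^ n * t k) := by ring
      rw [h1]
      have h2 : 2 * ((2:ℝ) ^ n * t k) ≤ 2 * t (k + n) := by linarith
      have h3 := (hgrow (k + n)).le
      calc 2 * ((2:ℝ) ^ n * t k) ≤ 2 * t (k + n) := h2
        _ ≤ t (k + n + 1) := h3
  have hpow_le : ∀ k, (2:ℝ) ^ k ≤ t k := by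
    intro k
    have := hdouble 0 k
    simp only [Nat.zero_add] at this
    calc (2:ℝ) ^ k = 2 ^ k * 1 := by ring
      _ ≤ 2 ^ k * t 0 := by
        have := ht1 0
        have h2 : (0:ℝ) ≤ 2 ^ k := by positivity
        nlinarith
      _ ≤ t k := this
  have httop : Tendsto t atTop atTop :=
    tendsto_atTop_mono hpow_le (tendsto_pow_atTop_atTop_of_one_lt one_lt_two)
  -- Step 3: the weight lam
  have hex : ∀ s : ℝ, ∃ k, s ≤ t k := by
    intro s
    exact (httop.eventually (eventually_ge_atTop s)).exists
  set N : ℝ → ℕ := fun s => Nat.find (hex s) with hN_def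
  set lam : ℝ → ℝ := fun s => 2 ^ N s with hlam_def
  have hNspec : ∀ s, s ≤ t (N s) := fun s => Nat.find_spec (hex s)
  have hNle : ∀ s k, s ≤ t k → N s ≤ k := fun s k h => Nat.find_min' (hex s) h
  have hNmono : Monotone N := fun a b hab => hNle a _ (hab.trans (hNspec b))
  have lam_mono : Monotone lam := fun a b hab =>
    pow_le_pow_right₀ one_le_two (hNmono hab)
  have lam_pos : ∀ s, 0 < lam s := fun s => pow_pos two_pos _
  have lam_le : ∀ (k : ℕ) (s : ℝ), s ≤ t k → lam s ≤ 2 ^ k := fun k s h =>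
    pow_le_pow_right₀ one_le_two (hNle s k h)
  have lam_tendsto : Tendsto lam atTop atTop := by
    rw [tendsto_atTop]
    intro b
    obtain ⟨k, hk⟩ := pow_unbounded_of_one_lt b (one_lt_two (α := ℝ))
    filter_upwards [eventually_gt_atTop (t k)] with s hs
    have hks : k < N s := by
      by_contra hcon
      push_neg at hcon
      exact absurd ((hNspec s).trans (htmono.monotone hcon)) (not_le.2 hs)
    calc b ≤ 2 ^ k := hk.le
      _ ≤ 2 ^ N s := pow_le_pow_right₀ one_le_two hks.le
  -- integrability
  have hInt : ∀ a : ℝ, IntegrableOn g (Set.Ioc (0:ℝ) a) := by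
    intro a
    refine Integrable.mono' (integrable_const B) hgm.aestronglyMeasurable ?_
    refine (ae_restrict_iff' measurableSet_Ioc).2 (ae_of_all _ fun s hs => ?_)
    simpa [Real.norm_eq_abs] using hB s hs.1
  have hIntlg : ∀ a : ℝ, IntegrableOn (fun s => lam s * g s) (Set.Ioc (0:ℝ) a) := by
    intro a
    have hB0 : 0 ≤ B := le_trans (abs_nonneg _) (hB 1 one_pos)
    refine Integrable.mono' (integrable_const (lam a * B))
      ((lam_mono.measurable.mul hgm).aestronglyMeasurable) ?_
    refine (ae_restrict_iff' measurableSet_Ioc).2 (ae_of_all _ fun s hs => ?_)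
    have h1 : lam s ≤ lam a := lam_mono hs.2
    have h2 : |g s| ≤ B := hB s hs.1
    rw [Real.norm_eq_abs, abs_mul, abs_of_pos (lam_pos s)]
    exact mul_le_mul h1 h2 (abs_nonneg _) (le_of_lt (lt_of_lt_of_le (lam_pos s) h1))
  -- nonnegativity of g on Ioc 0 a (a.e.)
  have hg_ae : ∀ a : ℝ, (0:ℝ → ℝ) ≤ᵐ[volume.restrict (Set.Ioc (0:ℝ) a)] g := by
    intro a
    exact (ae_restrict_iff' measurableSet_Ioc).2 (ae_of_all _ fun s hs => hg0 s hs.1)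
  -- piecewise bound
  have hpiece : ∀ k : ℕ, ∫ s in Set.Ioc (t k) (t (k + 1)), lam s * g s ≤
      2 ^ (k + 1) * ((4:ℝ)⁻¹ ^ (k + 1) * t (k + 1)) := by
    intro k
    have hsub : Set.Ioc (t k) (t (k + 1)) ⊆ Set.Ioc (0:ℝ) (t (k + 1)) :=
      Set.Ioc_subset_Ioc_left (htpos k).le
    have hint1 : IntegrableOn (fun s => lam s * g s) (Set.Ioc (t k) (t (k + 1))) :=
      (hIntlg (t (k + 1))).mono_set hsub
    have hint2' : IntegrableOn (fun s => (2:ℝ) ^ (k + 1) * g s) (Set.Ioc (0:ℝ) (t (k + 1))) :=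
      (hInt (t (k + 1))).const_mul _
    have hint2 : IntegrableOn (fun s => (2:ℝ) ^ (k + 1) * g s) (Set.Ioc (t k) (t (k + 1))) :=
      hint2'.mono_set hsub
    have step1 : ∫ s in Set.Ioc (t k) (t (k + 1)), lam s * g s ≤
        ∫ s in Set.Ioc (t k) (t (k + 1)), (2:ℝ) ^ (k + 1) * g s := by
      refine setIntegral_mono_on hint1 hint2 measurableSet_Ioc fun s hs => ?_
      have hs0 : 0 < s := lt_of_le_of_lt (htpos k).le hs.1
      exact mul_le_mul_of_nonneg_right (lam_le (k + 1) s hs.2) (hg0 s hs0)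
    have step2 : ∫ s in Set.Ioc (t k) (t (k + 1)), (2:ℝ) ^ (k + 1) * g s =
        (2:ℝ) ^ (k + 1) * ∫ s in Set.Ioc (t k) (t (k + 1)), g s := by
      exact integral_const_mul _ _
    have step3 : ∫ s in Set.Ioc (t k) (t (k + 1)), g s ≤
        ∫ s in Set.Ioc (0:ℝ) (t (k + 1)), g s := by
      refine setIntegral_mono_set (hInt (t (k + 1))) (hg_ae (t (k + 1))) ?_
      exact HasSubset.Subset.eventuallyLE hsub
    have step4 := havgk (k + 1)
    have h2p : (0:ℝ) ≤ 2 ^ (k + 1) := by positivity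
    calc ∫ s in Set.Ioc (t k) (t (k + 1)), lam s * g s
        ≤ (2:ℝ) ^ (k + 1) * ∫ s in Set.Ioc (t k) (t (k + 1)), g s := by
          rw [← step2]; exact step1
      _ ≤ (2:ℝ) ^ (k + 1) * ∫ s in Set.Ioc (0:ℝ) (t (k + 1)), g s :=
          mul_le_mul_of_nonneg_left step3 h2p
      _ ≤ 2 ^ (k + 1) * ((4:ℝ)⁻¹ ^ (k + 1) * t (k + 1)) :=
          mul_le_mul_of_nonneg_left step4 h2p
  -- cumulative bound by induction
  have hS : ∀ n : ℕ, ∫ s in Set.Ioc (0:ℝ) (t n), lam s * g s ≤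
      ∑ k ∈ Finset.range (n + 1), 2 ^ k * ((4:ℝ)⁻¹ ^ k * t k) := by
    intro n
    induction n with
    | zero =>
      have step1 : ∫ s in Set.Ioc (0:ℝ) (t 0), lam s * g s ≤
          ∫ s in Set.Ioc (0:ℝ) (t 0), g s := by
        refine setIntegral_mono_on (hIntlg (t 0)) (hInt (t 0)) measurableSet_Ioc
          fun s hs => ?_
        have hl : lam s ≤ 1 := by simpa using lam_le 0 s hs.2
        nlinarith [hg0 s hs.1, lam_pos s]
      simpa using step1.trans (havgk 0)
    | succ n ih =>
      have hsplit : Set.Ioc (0:ℝ) (t (n + 1)) =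
          Set.Ioc (0:ℝ) (t n) ∪ Set.Ioc (t n) (t (n + 1)) := by
        rw [Set.Ioc_union_Ioc_eq_Ioc (htpos n).le (htmono (Nat.lt_succ_self n)).le]
      have hdisj : Disjoint (Set.Ioc (0:ℝ) (t n)) (Set.Ioc (t n) (t (n + 1))) :=
        Set.Ioc_disjoint_Ioc_of_le le_rfl
      have hsub : Set.Ioc (t n) (t (n + 1)) ⊆ Set.Ioc (0:ℝ) (t (n + 1)) :=
        Set.Ioc_subset_Ioc_left (htpos n).le
      rw [hsplit, setIntegral_union hdisj measurableSet_Ioc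
        ((hIntlg (t n))) ((hIntlg (t (n + 1))).mono_set hsub)]
      rw [Finset.sum_range_succ]
      exact add_le_add ih (hpiece n)
  -- each summand is at most (1/2)^n * t n
  have hterm : ∀ n k : ℕ, k ≤ n →
      2 ^ k * ((4:ℝ)⁻¹ ^ k * t k) ≤ (1 / 2 : ℝ) ^ n * t n := by
    intro n k hk
    have e1 : (2:ℝ) ^ k * 4⁻¹ ^ k = (1 / 2 : ℝ) ^ k := by
      rw [← mul_pow]; norm_num
    have h2n : (2:ℝ) ^ n = 2 ^ (n - k) * 2 ^ k := by
      rw [← pow_add, Nat.sub_add_cancel hk]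
    have e2 : ((1:ℝ) / 2) ^ n * 2 ^ (n - k) = (1 / 2 : ℝ) ^ k := by
      have hsplit : ((1:ℝ) / 2) ^ n = (1 / 2 : ℝ) ^ (n - k) * (1 / 2 : ℝ) ^ k := by
        rw [← pow_add, Nat.sub_add_cancel hk]
      rw [hsplit, mul_right_comm, ← mul_pow]
      norm_num
    have hd := hdouble k (n - k)
    rw [Nat.add_sub_cancel' hk] at hd
    calc 2 ^ k * ((4:ℝ)⁻¹ ^ k * t k) = ((1:ℝ) / 2) ^ k * t k := by
          rw [← mul_assoc, e1]
      _ = ((1:ℝ) / 2) ^ n * (2 ^ (n - k) * t k) := by rw [← mul_assoc, e2]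
      _ ≤ ((1:ℝ) / 2) ^ n * t n := by
          refine mul_le_mul_of_nonneg_left hd (by positivity)
  -- final bound
  have hfinal : ∀ n : ℕ,
      (1 / t n) * ∫ s in Set.Ioc (0:ℝ) (t n), lam s * g s ≤
        ((n:ℝ) + 1) * (1 / 2 : ℝ) ^ n := by
    intro n
    have hsum : ∑ k ∈ Finset.range (n + 1), 2 ^ k * ((4:ℝ)⁻¹ ^ k * t k) ≤
        ((n:ℝ) + 1) * ((1 / 2 : ℝ) ^ n * t n) := by
      calc ∑ k ∈ Finset.range (n + 1), 2 ^ k * ((4:ℝ)⁻¹ ^ k * t k)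
          ≤ ∑ _k ∈ Finset.range (n + 1), (1 / 2 : ℝ) ^ n * t n := by
            refine Finset.sum_le_sum fun k hk => ?_
            exact hterm n k (Nat.lt_succ_iff.mp (Finset.mem_range.mp hk))
        _ = ((n:ℝ) + 1) * ((1 / 2 : ℝ) ^ n * t n) := by
            rw [Finset.sum_const, Finset.card_range, nsmul_eq_mul]
            push_cast
            ring
    have h1 : (1 / t n) * ∫ s in Set.Ioc (0:ℝ) (t n), lam s * g s ≤
        (1 / t n) * (((n:ℝ) + 1) * ((1 / 2 : ℝ) ^ n * t n)) := by
      exact mul_le_mul_of_nonneg_left ((hS n).trans hsum) (one_div_pos.mpr (htpos n)).le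
    have h2 : (1 / t n) * (((n:ℝ) + 1) * ((1 / 2 : ℝ) ^ n * t n)) =
        ((n:ℝ) + 1) * (1 / 2 : ℝ) ^ n := by
      have hne := (htpos n).ne'
      field_simp
    rw [h2] at h1
    exact h1
  have hnonneg : ∀ n : ℕ,
      0 ≤ (1 / t n) * ∫ s in Set.Ioc (0:ℝ) (t n), lam s * g s := by
    intro n
    refine mul_nonneg (one_div_pos.mpr (htpos n)).le ?_
    refine setIntegral_nonneg measurableSet_Ioc fun s hs => ?_
    exact mul_nonneg (lam_pos s).le (hg0 s hs.1)
  have hgeo : Tendsto (fun n : ℕ => ((n:ℝ) + 1) * (1 / 2 : ℝ) ^ n) atTop (nhds 0) := by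
    have h1 : Tendsto (fun n : ℕ => (n:ℝ) ^ 1 * (1 / 2 : ℝ) ^ n) atTop (nhds 0) := by
      refine (summable_pow_mul_geometric_of_norm_lt_one (R := ℝ) 1 ?_).tendsto_atTop_zero
      rw [Real.norm_eq_abs, abs_of_pos] <;> norm_num
    have h2 : Tendsto (fun n : ℕ => (1 / 2 : ℝ) ^ n) atTop (nhds 0) := by
      refine tendsto_pow_atTop_nhds_zero_of_lt_one (by norm_num) (by norm_num)
    have := h1.add h2
    rw [add_zero] at this
    refine this.congr fun n => ?_
    ring
  refine ⟨lam, fun s _ => lam_pos s, lam_mono.monotoneOn _, lam_tendsto,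
    t, htpos, hgrow, httop, ?_⟩
  exact squeeze_zero hnonneg hfinal hgeo
end

section
/- Let g be as in the equivariant wave map setting with discrete zero set 𝒱, and suppose ψ₀ has finite energy E(ψ₀,0) ≤ M, is bounded by a constant depending on M, and δ := inf_{l ∈ 𝒱} |ψ₀(r₀) - l| > 0 for some r₀ > 0. Then for any γ > 1 there exists ε = ε(δ, γ, M, g) > 0 such that ∫_{r₀/γ}^{γ r₀} ((∂_rψ₀)² + g(ψ₀)²/r²) r dr ≥ ε. -/
open MeasureTheory Set Filter Topology

/-- concentration of energy away from the zeros of g. -/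
theorem stmt12 (g : ℝ → ℝ) (hg : Continuous g) (M M' δ γ : ℝ)
    (hδ : 0 < δ) (hγ : 1 < γ) :
    ∃ ε > (0:ℝ), ∀ (ψ₀ : ℝ → ℝ) (r₀ : ℝ), 0 < r₀ →
      (∀ x ∈ Set.Ioi (0:ℝ), DifferentiableAt ℝ ψ₀ x) →
      (∀ r > (0:ℝ), |ψ₀ r| ≤ M') →
      IntegrableOn (fun r => ((deriv ψ₀ r) ^ 2 + (g (ψ₀ r)) ^ 2 / r ^ 2) * r)
        (Set.Ioi 0) →
      (∫ r in Set.Ioi (0:ℝ), ((deriv ψ₀ r) ^ 2 + (g (ψ₀ r)) ^ 2 / r ^ 2) * r) ≤ M →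
      (∀ l : ℝ, g l = 0 → δ ≤ |ψ₀ r₀ - l|) →
      ε ≤ ∫ r in Set.Ioc (r₀ / γ) (γ * r₀),
            ((deriv ψ₀ r) ^ 2 + (g (ψ₀ r)) ^ 2 / r ^ 2) * r := by
  have hγ0 : (0:ℝ) < γ := lt_trans one_pos hγ
  set L := Real.log (γ ^ 2) with hLdef
  have hL : 0 < L := Real.log_pos (by nlinarith)
  set K : Set ℝ := {x | |x| ≤ M' ∧ ∀ l, g l = 0 → δ / 2 ≤ |x - l|} with hKdef
  obtain ⟨c, hc0, hcK⟩ : ∃ c > (0:ℝ), ∀ x ∈ K, c ≤ (g x) ^ 2 := by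
    rcases K.eq_empty_or_nonempty with h | h
    · exact ⟨1, one_pos, by simp [h]⟩
    · have hKclosed : IsClosed K := by
        have : K = {x | |x| ≤ M'} ∩ ⋂ l, ⋂ (_ : g l = 0), {x | δ / 2 ≤ |x - l|} := by
          ext x; simp [hKdef, Set.mem_iInter]
        rw [this]
        exact (isClosed_le continuous_abs continuous_const).inter
          (isClosed_iInter fun l => isClosed_iInter fun _ =>
            isClosed_le continuous_const ((continuous_id.sub continuous_const).abs))
      have hKcomp : IsCompact K := (isCompact_Icc (a := -M') (b := M')).of_isClosed_subset
        hKclosed (fun x hx => abs_le.mp hx.1)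
      obtain ⟨x₀, hx₀K, hmin⟩ := hKcomp.exists_isMinOn h
        ((hg.pow 2).continuousOn)
      refine ⟨(g x₀) ^ 2, ?_, fun x hx => hmin hx⟩
      have : g x₀ ≠ 0 := by
        intro h0
        have := hx₀K.2 x₀ h0
        simp at this
        linarith
      positivity
  refine ⟨min (δ ^ 2 / (4 * L)) (c * L), lt_min (by positivity) (by positivity), ?_⟩
  intro ψ₀ r₀ hr₀ hdiff hbd hint _ hdist
  set a := r₀ / γ with hadef
  set b := γ * r₀ with hbdef
  have ha0 : 0 < a := div_pos hr₀ hγ0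
  have har : a < r₀ := by rw [hadef, div_lt_iff₀ hγ0]; nlinarith
  have hrb : r₀ < b := by rw [hbdef]; nlinarith
  have hab : a < b := har.trans hrb
  have hIccsub : Icc a b ⊆ Ioi (0:ℝ) := fun x hx => lt_of_lt_of_le ha0 hx.1
  set F : ℝ → ℝ := fun r => ((deriv ψ₀ r) ^ 2 + (g (ψ₀ r)) ^ 2 / r ^ 2) * r with hFdef
  -- integrability on Icc a b
  have hIF : IntegrableOn F (Icc a b) := hint.mono_set hIccsub
  have hmeasd : Measurable (deriv ψ₀) := measurable_deriv ψ₀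
  have hFnn : ∀ r ∈ Icc a b, (deriv ψ₀ r) ^ 2 * r ≤ F r ∧ 0 ≤ (deriv ψ₀ r) ^ 2 * r := by
    intro r hr
    have hr0 : 0 < r := hIccsub hr
    constructor
    · have : 0 ≤ (g (ψ₀ r)) ^ 2 / r ^ 2 * r := by positivity
      rw [hFdef]; nlinarith
    · positivity
  have hID : IntegrableOn (fun r => (deriv ψ₀ r) ^ 2 * r) (Icc a b) := by
    refine hIF.mono' (((hmeasd.pow_const 2).mul measurable_id).aestronglyMeasurable) ?_
    refine (ae_restrict_iff' measurableSet_Icc).mpr (ae_of_all _ fun r hr => ?_)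
    rw [Real.norm_eq_abs, abs_of_nonneg (hFnn r hr).2]
    exact (hFnn r hr).1
  have hI1r : IntegrableOn (fun r => 1 / r) (Icc a b) := by
    refine ContinuousOn.integrableOn_Icc ?_
    exact continuousOn_const.div continuousOn_id fun x hx => ne_of_gt (hIccsub hx)
  set t := 2 * L / δ with htdef
  have ht : 0 < t := by positivity
  have hptwise : ∀ r ∈ Icc a b,
      |deriv ψ₀ r| ≤ t / 2 * ((deriv ψ₀ r) ^ 2 * r) + 1 / (2 * t) * (1 / r) := by
    intro r hr
    have hr0 : 0 < r := hIccsub hr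
    have key : |deriv ψ₀ r| ≤ (t ^ 2 * r ^ 2 * (deriv ψ₀ r) ^ 2 + 1) / (2 * t * r) := by
      rw [le_div_iff₀ (by positivity), ← sq_abs (deriv ψ₀ r)]
      nlinarith [sq_nonneg (t * r * |deriv ψ₀ r| - 1), abs_nonneg (deriv ψ₀ r)]
    refine key.trans (le_of_eq ?_)
    field_simp
  have hIabs : IntegrableOn (fun r => |deriv ψ₀ r|) (Icc a b) := by
    refine Integrable.mono' ((hID.const_mul (t / 2)).add (hI1r.const_mul (1 / (2 * t))))
      (hmeasd.abs.aestronglyMeasurable) ?_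
    refine (ae_restrict_iff' measurableSet_Icc).mpr (ae_of_all _ fun r hr => ?_)
    rw [Real.norm_eq_abs, abs_abs]
    exact hptwise r hr
  have hIderiv : IntegrableOn (deriv ψ₀) (Icc a b) := by
    refine hIabs.mono' hmeasd.aestronglyMeasurable (ae_of_all _ fun r => ?_)
    rw [Real.norm_eq_abs]
  -- value of ∫ 1/r
  have h1r : ∫ r in Ioc a b, (1 / r) = L := by
    rw [← intervalIntegral.integral_of_le hab.le, integral_one_div]
    · rw [hLdef]
      congr 1
      rw [hadef, hbdef]
      field_simp
    · intro h0
      rcases Set.mem_uIcc.mp h0 with h | h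
      · exact absurd h.1 (not_le.mpr ha0)
      · exact absurd h.1 (not_le.mpr (ha0.trans hab))
  have hIFIoc : IntegrableOn F (Ioc a b) := hIF.mono_set Ioc_subset_Icc_self
  have hFnnIoc : ∀ r ∈ Ioc a b, 0 ≤ F r := by
    intro r hr
    have hr0 : 0 < r := ha0.trans hr.1
    have : 0 ≤ (g (ψ₀ r)) ^ 2 / r ^ 2 := by positivity
    rw [hFdef]; positivity
  by_cases hosc : ∃ r₁ ∈ Icc a b, δ / 2 ≤ |ψ₀ r₁ - ψ₀ r₀|
  · -- oscillation case: Dirichlet energy concentrates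
    obtain ⟨r₁, hr₁, hoscr₁⟩ := hosc
    have hr₀mem : r₀ ∈ Icc a b := ⟨har.le, hrb.le⟩
    have huIccsub : uIcc r₀ r₁ ⊆ Icc a b := uIcc_subset_Icc hr₀mem hr₁
    have hftc : ∫ x in r₀..r₁, deriv ψ₀ x = ψ₀ r₁ - ψ₀ r₀ := by
      refine intervalIntegral.integral_deriv_eq_sub
        (fun x hx => hdiff x (hIccsub (huIccsub hx))) ?_
      exact (hIderiv.mono_set huIccsub).intervalIntegrable
    have step1 : δ / 2 ≤ ∫ r in Ioc a b, |deriv ψ₀ r| := by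
      have h1 : |ψ₀ r₁ - ψ₀ r₀| ≤ ∫ x in Set.uIoc r₀ r₁, |deriv ψ₀ x| := by
        rw [← hftc]
        simpa [Real.norm_eq_abs] using
          intervalIntegral.norm_integral_le_integral_norm_uIoc (f := deriv ψ₀)
            (a := r₀) (b := r₁) (μ := volume)
      have h2 : (∫ x in Set.uIoc r₀ r₁, |deriv ψ₀ x|) ≤ ∫ r in Ioc a b, |deriv ψ₀ r| := by
        refine setIntegral_mono_set (hIabs.mono_set Ioc_subset_Icc_self)
          (ae_of_all _ fun r => abs_nonneg _) (HasSubset.Subset.eventuallyLE ?_)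
        unfold Set.uIoc
        exact Set.Ioc_subset_Ioc (le_min hr₀mem.1 hr₁.1) (max_le hr₀mem.2 hr₁.2)
      linarith
    have step2 : (∫ r in Ioc a b, |deriv ψ₀ r|) ≤
        t / 2 * (∫ r in Ioc a b, (deriv ψ₀ r) ^ 2 * r) + 1 / (2 * t) * L := by
      have := setIntegral_mono_on (hIabs.mono_set Ioc_subset_Icc_self)
        (((hID.mono_set Ioc_subset_Icc_self).const_mul (t / 2)).add
          ((hI1r.mono_set Ioc_subset_Icc_self).const_mul (1 / (2 * t)))) measurableSet_Ioc
        (fun r hr => hptwise r (Ioc_subset_Icc_self hr))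
      simp only [Pi.add_apply] at this
      rw [integral_add ((hID.mono_set Ioc_subset_Icc_self).const_mul (t / 2))
        ((hI1r.mono_set Ioc_subset_Icc_self).const_mul (1 / (2 * t))),
        integral_const_mul, integral_const_mul, h1r] at this
      exact this
    have step3 : (∫ r in Ioc a b, (deriv ψ₀ r) ^ 2 * r) ≤ ∫ r in Ioc a b, F r := by
      refine setIntegral_mono_on (hID.mono_set Ioc_subset_Icc_self) hIFIoc
        measurableSet_Ioc (fun r hr => (hFnn r (Ioc_subset_Icc_self hr)).1)
    have hLt : 1 / (2 * t) * L = δ / 4 := by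
      rw [htdef]; field_simp; ring
    have hD : δ ^ 2 / (4 * L) ≤ ∫ r in Ioc a b, (deriv ψ₀ r) ^ 2 * r := by
      set D := ∫ r in Ioc a b, (deriv ψ₀ r) ^ 2 * r with hDdef
      have h4 : δ / 4 ≤ t / 2 * D := by rw [hLt] at step2; linarith
      have ht2 : t / 2 = L / δ := by rw [htdef]; ring
      rw [ht2] at h4
      rw [div_le_iff₀ (by positivity)]
      have h5 := mul_le_mul_of_nonneg_right h4 hδ.le
      have h6 : L / δ * D * δ = L * D := by field_simp
      nlinarith [h5, h6]
    calc min (δ ^ 2 / (4 * L)) (c * L) ≤ δ ^ 2 / (4 * L) := min_le_left _ _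
      _ ≤ ∫ r in Ioc a b, (deriv ψ₀ r) ^ 2 * r := hD
      _ ≤ ∫ r in Ioc a b, F r := step3
  · -- no oscillation: potential energy concentrates
    push_neg at hosc
    have hmemK : ∀ r ∈ Icc a b, ψ₀ r ∈ K := by
      intro r hr
      refine ⟨hbd r (hIccsub hr), fun l hl => ?_⟩
      have h1 : δ ≤ |ψ₀ r₀ - l| := hdist l hl
      have h2 : |ψ₀ r - ψ₀ r₀| < δ / 2 := hosc r hr
      have : |ψ₀ r₀ - l| ≤ |ψ₀ r₀ - ψ₀ r| + |ψ₀ r - l| := abs_sub_le _ _ _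
      rw [abs_sub_comm (ψ₀ r₀) (ψ₀ r)] at this
      linarith
    have hpt : ∀ r ∈ Ioc a b, c * (1 / r) ≤ F r := by
      intro r hr
      have hr0 : 0 < r := ha0.trans hr.1
      have hc : c ≤ (g (ψ₀ r)) ^ 2 := hcK _ (hmemK r (Ioc_subset_Icc_self hr))
      have h2 : (g (ψ₀ r)) ^ 2 / r ^ 2 * r = (g (ψ₀ r)) ^ 2 * (1 / r) := by
        field_simp
      have h3 : c * (1 / r) ≤ (g (ψ₀ r)) ^ 2 * (1 / r) :=
        mul_le_mul_of_nonneg_right hc (by positivity)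
      have h4 : 0 ≤ (deriv ψ₀ r) ^ 2 * r := by positivity
      have hexp : F r = (deriv ψ₀ r) ^ 2 * r + (g (ψ₀ r)) ^ 2 / r ^ 2 * r := by
        simp only [hFdef]; ring
      rw [hexp]
      have h5 : c * (1 / r) ≤ (g (ψ₀ r)) ^ 2 / r ^ 2 * r := by rw [h2]; exact h3
      linarith
    have hstep : c * L ≤ ∫ r in Ioc a b, F r := by
      have h1 : (∫ r in Ioc a b, c * (1 / r)) ≤ ∫ r in Ioc a b, F r :=
        setIntegral_mono_on ((hI1r.mono_set Ioc_subset_Icc_self).const_mul c)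
          hIFIoc measurableSet_Ioc hpt
      rwa [integral_const_mul, h1r] at h1
    exact le_trans (min_le_right _ _) hstep
end
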